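/- The proof system UM is complete: every formula φ ∈ L that is valid (true in every epistemic state) is derivable in UM. -/

import Mathlib

/-- Formulas of the language `L` of epistemic logic with updates (events of
epistemic and/or ontic change).  The constructor `upd` inlines an update
`(U,e)`: an event type `E`, accessibility relations on events, preconditions,
postconditions, and the actual event `e`.  `⊤` and `⊥` are included as the
usual primitives. -/
inductive Form (A P : Type) : Type 1 where
  | atom : P → Form A P
  | top : Form A P
  | bot : Form A P
  | neg : Form A P → Form A P
  | and : Form A P → Form A P → Form A P
  | box : A → Form A P → Form A P
  | cbox : Set A → Form A P → Form A P
  | upd : (E : Type) → (A → E → E → Prop) → (E → Form A P) → (E → P → Form A P) →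
      E → Form A P → Form A P

/-- An update model `U = (E, rel, pre, post)`. -/
structure Upd (A P : Type) : Type 1 where
  E : Type
  rel : A → E → E → Prop
  pre : E → Form A P
  post : E → P → Form A P

/-- An epistemic model `M = (S, R, V)`. -/
structure Model (A P : Type) : Type 1 where
  S : Type
  R : A → S → S → Prop
  V : P → S → Prop

/-- The formula `[U,e]φ`. -/
def Form.updF {A P : Type} (U : Upd A P) (e : U.E) (φ : Form A P) : Form A P :=
  Form.upd U.E U.rel U.pre U.post e φ

/-- The product construction, parameterised by the satisfaction relations of the
preconditions and postconditions of the events. -/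
def prodM {A P : Type} (M : Model A P) (E : Type) (rel : A → E → E → Prop)
    (preS : E → M.S → Prop) (postS : E → M.S → P → Prop) : Model A P where
  S := { x : M.S × E // preS x.2 x.1 }
  R a x y := M.R a x.1.1 y.1.1 ∧ rel a x.1.2 y.1.2
  V p x := postS x.1.2 x.1.1 p

/-- Satisfaction: `sat φ M s` is `(M,s) ⊨ φ`. -/
def sat {A P : Type} : Form A P → (M : Model A P) → M.S → Prop
  | .atom p, M, s => M.V p s
  | .top, _, _ => True
  | .bot, _, _ => False
  | .neg φ, M, s => ¬ sat φ M s
  | .and φ ψ, M, s => sat φ M s ∧ sat ψ M s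
  | .box a φ, M, s => ∀ t, M.R a s t → sat φ M t
  | .cbox B φ, M, s =>
      ∀ t, Relation.ReflTransGen (fun x y => ∃ a ∈ B, M.R a x y) s t → sat φ M t
  | .upd E rel pre post e φ, M, s =>
      ∀ h : sat (pre e) M s,
        sat φ (prodM M E rel (fun f t => sat (pre f) M t) (fun f t p => sat (post f p) M t))
          ⟨(s, e), h⟩

/-- The product update `M ⊗ U`; its domain is `{(t,f) | (M,t) ⊨ pre(f)}`. -/
def Model.prodUpd {A P : Type} (M : Model A P) (U : Upd A P) : Model A P :=
  prodM M U.E U.rel (fun f t => sat (U.pre f) M t) (fun f t p => sat (U.post f p) M t)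

/-- Well-formedness of a formula: all event sets of update models occurring in it are
finite and nonempty, and all postconditions differ from the identity `p ↦ p` on only
finitely many atoms (this finite set being the domain `dom(post(e))`). -/
def Form.WF {A P : Type} : Form A P → Prop
  | .atom _ => True
  | .top => True
  | .bot => True
  | .neg φ => φ.WF
  | .and φ ψ => φ.WF ∧ ψ.WF
  | .box _ φ => φ.WF
  | .cbox _ φ => φ.WF
  | .upd E _ pre post _ φ =>
      Nonempty E ∧ Finite E ∧ (∀ f, (pre f).WF) ∧ (∀ f p, (post f p).WF) ∧
      (∀ f, {p | post f p ≠ Form.atom p}.Finite) ∧ φ.WF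

/-- Well-formedness of an update model: the event set is finite and nonempty, the
preconditions and postconditions are well-formed formulas, and each postcondition
differs from the identity on only finitely many atoms, the set
`{p | post e p ≠ atom p}` being the domain `dom(post(e))`. -/
def Upd.WF {A P : Type} (U : Upd A P) : Prop :=
  Nonempty U.E ∧ Finite U.E ∧ (∀ f, (U.pre f).WF) ∧ (∀ f p, (U.post f p).WF) ∧
  (∀ f, {p | U.post f p ≠ Form.atom p}.Finite)

/-- Disjunction, as the usual abbreviation. -/
def Form.or {A P : Type} (φ ψ : Form A P) : Form A P := (φ.neg.and ψ.neg).neg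

/-- Implication, as the usual abbreviation. -/
def Form.imp {A P : Type} (φ ψ : Form A P) : Form A P := (φ.and ψ.neg).neg

/-- Bi-implication, as the usual abbreviation. -/
def Form.biImp {A P : Type} (φ ψ : Form A P) : Form A P := (φ.imp ψ).and (ψ.imp φ)

/-- Finite conjunction of a list of formulas. -/
def bigAnd {A P : Type} (l : List (Form A P)) : Form A P := l.foldr Form.and Form.top

/-- Finite disjunction of a list of formulas. -/
def bigOr {A P : Type} (l : List (Form A P)) : Form A P := l.foldr Form.or Form.bot

open Classical in
/-- Composition `(U,e) ; (U',e')` of update models: the underlying update model has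
events `E × E'`, `pre''(f,f') = pre(f) ∧ [U,f]pre'(f')`, and for `p ∈ dom(post''(f,f'))
= dom(post(f)) ∪ dom(post'(f'))`: `post''(f,f')(p) = post(f)(p)` if `p ∉ dom(post'(f'))`
and `[U,f]post'(f')(p)` otherwise; the point is the pair `(e,e')`. -/
noncomputable def Upd.comp {A P : Type} (U U' : Upd A P) : Upd A P where
  E := U.E × U'.E
  rel a x y := U.rel a x.1 y.1 ∧ U'.rel a x.2 y.2
  pre x := (U.pre x.1).and (Form.updF U x.1 (U'.pre x.2))
  post x p :=
    if U'.post x.2 p = Form.atom p then U.post x.1 p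
    else Form.updF U x.1 (U'.post x.2 p)

/-- Propositional formulas in `n` variables (templates for instantiations of
propositional tautologies). -/
inductive PropForm : ℕ → Type where
  | var {n : ℕ} : Fin n → PropForm n
  | top {n : ℕ} : PropForm n
  | bot {n : ℕ} : PropForm n
  | neg {n : ℕ} : PropForm n → PropForm n
  | and {n : ℕ} : PropForm n → PropForm n → PropForm n

/-- Boolean evaluation of a propositional template. -/
def PropForm.eval {n : ℕ} (v : Fin n → Bool) : PropForm n → Bool
  | .var i => v i
  | .top => true
  | .bot => false
  | .neg t => !(t.eval v)
  | .and t u => t.eval v && u.eval v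

/-- Substitution of formulas for the variables of a propositional template. -/
def PropForm.subst {A P : Type} {n : ℕ} (σ : Fin n → Form A P) : PropForm n → Form A P
  | .var i => σ i
  | .top => Form.top
  | .bot => Form.bot
  | .neg t => Form.neg (t.subst σ)
  | .and t u => Form.and (t.subst σ) (u.subst σ)

/-- A propositional template is a tautology: true under every Boolean valuation. -/
def PropForm.Taut {n : ℕ} (t : PropForm n) : Prop := ∀ v : Fin n → Bool, t.eval v = true

/-- The proof system UM. -/
inductive Deriv {A P : Type} : Form A P → Prop where
  /-- all instantiations of propositional tautologies -/
  | taut {n : ℕ} (t : PropForm n) (σ : Fin n → Form A P) (ht : t.Taut)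
      (hσ : ∀ i, (σ i).WF) : Deriv (t.subst σ)
  /-- distribution for `[a]` -/
  | distBox (a : A) (φ ψ : Form A P) (hφ : φ.WF) (hψ : ψ.WF) :
      Deriv (Form.imp (Form.box a (Form.imp φ ψ)) (Form.imp (Form.box a φ) (Form.box a ψ)))
  /-- distribution for `[B*]` -/
  | distCbox (B : Set A) (φ ψ : Form A P) (hφ : φ.WF) (hψ : ψ.WF) :
      Deriv (Form.imp (Form.cbox B (Form.imp φ ψ)) (Form.imp (Form.cbox B φ) (Form.cbox B ψ)))
  /-- distribution for `[U,e]` -/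
  | distUpd (U : Upd A P) (e : U.E) (hU : U.WF) (φ ψ : Form A P) (hφ : φ.WF) (hψ : ψ.WF) :
      Deriv (Form.imp (Form.updF U e (Form.imp φ ψ))
        (Form.imp (Form.updF U e φ) (Form.updF U e ψ)))
  /-- modus ponens -/
  | mp {φ ψ : Form A P} : Deriv (Form.imp φ ψ) → Deriv φ → Deriv ψ
  /-- necessitation for `[a]` -/
  | necBox (a : A) {φ : Form A P} : Deriv φ → Deriv (Form.box a φ)
  /-- necessitation for `[B*]` -/
  | necCbox (B : Set A) {φ : Form A P} : Deriv φ → Deriv (Form.cbox B φ)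
  /-- necessitation for `[U,e]` -/
  | necUpd (U : Upd A P) (e : U.E) (hU : U.WF) {φ : Form A P} :
      Deriv φ → Deriv (Form.updF U e φ)
  /-- update and atoms -/
  | updAtom (U : Upd A P) (e : U.E) (hU : U.WF) (p : P) :
      Deriv (Form.biImp (Form.updF U e (Form.atom p)) (Form.imp (U.pre e) (U.post e p)))
  /-- update and negation -/
  | updNeg (U : Upd A P) (e : U.E) (hU : U.WF) (φ : Form A P) (hφ : φ.WF) :
      Deriv (Form.biImp (Form.updF U e (Form.neg φ))
        (Form.imp (U.pre e) (Form.neg (Form.updF U e φ))))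
  /-- update and conjunction -/
  | updAnd (U : Upd A P) (e : U.E) (hU : U.WF) (φ ψ : Form A P) (hφ : φ.WF) (hψ : ψ.WF) :
      Deriv (Form.biImp (Form.updF U e (Form.and φ ψ))
        (Form.and (Form.updF U e φ) (Form.updF U e ψ)))
  /-- update and knowledge (`lf` enumerates `{f | (e,f) ∈ R(a)}`) -/
  | updBox (U : Upd A P) (e : U.E) (hU : U.WF) (a : A) (φ : Form A P) (hφ : φ.WF)
      (lf : List U.E) (hlf : ∀ f, f ∈ lf ↔ U.rel a e f) :
      Deriv (Form.biImp (Form.updF U e (Form.box a φ))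
        (Form.imp (U.pre e) (bigAnd (lf.map fun f => Form.box a (Form.updF U f φ)))))
  /-- update composition -/
  | updComp (U : Upd A P) (e : U.E) (U' : Upd A P) (e' : U'.E) (hU : U.WF) (hU' : U'.WF)
      (φ : Form A P) (hφ : φ.WF) :
      Deriv (Form.biImp (Form.updF U e (Form.updF U' e' φ))
        (Form.updF (U.comp U') (e, e') φ))
  /-- mix (`lB` enumerates `B`; `[B]ψ` is the conjunction `⋀_{a ∈ B} [a]ψ`) -/
  | mix (B : Set A) (lB : List A) (hlB : ∀ a, a ∈ lB ↔ a ∈ B) (φ : Form A P) (hφ : φ.WF) :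
      Deriv (Form.imp (Form.cbox B φ)
        (Form.and φ (bigAnd (lB.map fun a => Form.box a (Form.cbox B φ)))))
  /-- induction axiom -/
  | induc (B : Set A) (lB : List A) (hlB : ∀ a, a ∈ lB ↔ a ∈ B) (φ : Form A P) (hφ : φ.WF) :
      Deriv (Form.imp (Form.cbox B (Form.imp φ (bigAnd (lB.map fun a => Form.box a φ))))
        (Form.imp φ (Form.cbox B φ)))
  /-- updates and common knowledge -/
  | updCK (U : Upd A P) (e : U.E) (hU : U.WF) (B : Set A) (φ : Form A P) (hφ : φ.WF)
      (χ : U.E → Form A P) (hχ : ∀ f, (χ f).WF)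
      (h1 : ∀ f, Relation.ReflTransGen (fun x y => ∃ a ∈ B, U.rel a x y) e f →
        Deriv (Form.imp (χ f) (Form.updF U f φ)))
      (h2 : ∀ f, Relation.ReflTransGen (fun x y => ∃ a ∈ B, U.rel a x y) e f →
        ∀ a ∈ B, ∀ g, U.rel a f g →
          Deriv (Form.imp (Form.and (χ f) (U.pre f)) (Form.box a (χ g)))) :
      Deriv (Form.imp (χ e) (Form.updF U e (Form.cbox B φ)))


/- ================= Auxiliary development for completeness ================= -/

set_option maxHeartbeats 1000000

namespace UM

open Classical

variable {A P : Type}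

/-! ### Notation -/

scoped notation "⊥'" => Form.bot
scoped notation "⊤'" => Form.top
scoped prefix:max "∼" => Form.neg
scoped infixr:62 " ⋏ " => Form.and
scoped infixr:60 " ⟶ " => Form.imp
scoped infixr:60 " ⋎ " => Form.or
scoped infix:58 " ⟷ " => Form.biImp

/-! ### Well-formedness lemmas -/

@[simp] lemma wf_atom (p : P) : (Form.atom p : Form A P).WF := trivial
@[simp] lemma wf_top : (Form.top : Form A P).WF := trivial
@[simp] lemma wf_bot : (Form.bot : Form A P).WF := trivial
@[simp] lemma wf_neg {φ : Form A P} : (∼φ).WF ↔ φ.WF := Iff.rfl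
@[simp] lemma wf_and {φ ψ : Form A P} : (φ ⋏ ψ).WF ↔ φ.WF ∧ ψ.WF := Iff.rfl
@[simp] lemma wf_box {a : A} {φ : Form A P} : (Form.box a φ).WF ↔ φ.WF := Iff.rfl
@[simp] lemma wf_cbox {B : Set A} {φ : Form A P} : (Form.cbox B φ).WF ↔ φ.WF := Iff.rfl
@[simp] lemma wf_imp {φ ψ : Form A P} : (φ ⟶ ψ).WF ↔ φ.WF ∧ ψ.WF := Iff.rfl
@[simp] lemma wf_or {φ ψ : Form A P} : (φ ⋎ ψ).WF ↔ φ.WF ∧ ψ.WF := Iff.rfl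
@[simp] lemma wf_biImp {φ ψ : Form A P} : (φ ⟷ ψ).WF ↔ (φ.WF ∧ ψ.WF) := by
  constructor
  · rintro ⟨⟨h1, h2⟩, -⟩; exact ⟨h1, h2⟩
  · rintro ⟨h1, h2⟩; exact ⟨⟨h1, h2⟩, h2, h1⟩

@[simp] lemma wf_updF {U : Upd A P} {e : U.E} {φ : Form A P} :
    (Form.updF U e φ).WF ↔
      (Nonempty U.E ∧ Finite U.E ∧ (∀ f, (U.pre f).WF) ∧ (∀ f p, (U.post f p).WF) ∧
        (∀ f, {p | U.post f p ≠ Form.atom p}.Finite) ∧ φ.WF) := Iff.rfl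

lemma wf_updF' {U : Upd A P} (hU : U.WF) (e : U.E) {φ : Form A P} (hφ : φ.WF) :
    (Form.updF U e φ).WF := by
  obtain ⟨h1, h2, h3, h4, h5⟩ := hU
  exact ⟨h1, h2, h3, h4, h5, hφ⟩

lemma wf_of_updF {U : Upd A P} {e : U.E} {φ : Form A P} (h : (Form.updF U e φ).WF) :
    U.WF ∧ φ.WF := by
  obtain ⟨h1, h2, h3, h4, h5, h6⟩ := h
  exact ⟨⟨h1, h2, h3, h4, h5⟩, h6⟩

@[simp] lemma wf_bigAnd {l : List (Form A P)} : (bigAnd l).WF ↔ ∀ φ ∈ l, φ.WF := by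
  induction l with
  | nil => simp [bigAnd]
  | cons ψ l ih => simpa [bigAnd] using fun _ => ih

@[simp] lemma wf_bigOr {l : List (Form A P)} : (bigOr l).WF ↔ ∀ φ ∈ l, φ.WF := by
  induction l with
  | nil => simp [bigOr]
  | cons ψ l ih => simpa [bigOr, Form.or] using fun _ => ih

lemma wf_subst {n : ℕ} {σ : Fin n → Form A P} (hσ : ∀ i, (σ i).WF) (t : PropForm n) :
    (t.subst σ).WF := by
  induction t with
  | var i => exact hσ i
  | top => trivial
  | bot => trivial
  | neg t ih => exact ih
  | and t u ih1 ih2 => exact ⟨ih1, ih2⟩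

lemma Upd.comp_wf {U U' : Upd A P} (hU : U.WF) (hU' : U'.WF) : (U.comp U').WF := by
  obtain ⟨n1, f1, p1, q1, d1⟩ := hU
  obtain ⟨n2, f2, p2, q2, d2⟩ := hU'
  haveI := f1; haveI := f2
  refine ⟨⟨⟨n1.some, n2.some⟩⟩, inferInstanceAs (Finite (U.E × U'.E)), ?_, ?_, ?_⟩
  · rintro ⟨f, f'⟩
    exact ⟨p1 f, wf_updF' ⟨n1, f1, p1, q1, d1⟩ f (p2 f')⟩
  · rintro ⟨f, f'⟩ p
    simp only [Upd.comp]
    split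
    · exact q1 f p
    · exact wf_updF' ⟨n1, f1, p1, q1, d1⟩ f (q2 f' p)
  · rintro ⟨f, f'⟩
    refine Set.Finite.subset ((d1 f).union (d2 f')) ?_
    intro p hp
    simp only [Set.mem_setOf_eq, Upd.comp] at hp
    by_contra hc
    simp only [Set.mem_union, Set.mem_setOf_eq, not_or, not_not] at hc
    rw [if_pos hc.2] at hp
    exact hp hc.1

/-! ### Derivations are well-formed -/

lemma derivWF {φ : Form A P} (h : Deriv φ) : φ.WF := by
  induction h with
  | taut t σ ht hσ => exact wf_subst hσ t
  | distBox a φ ψ hφ hψ => simp [hφ, hψ]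
  | distCbox B φ ψ hφ hψ => simp [hφ, hψ]
  | distUpd U e hU φ ψ hφ hψ =>
      have := wf_updF' hU e (φ := φ ⟶ ψ) (by simp [hφ, hψ])
      exact ⟨this, wf_updF' hU e hφ, wf_updF' hU e hψ⟩
  | mp h1 h2 ih1 ih2 => exact (wf_imp.1 ih1).2
  | necBox a h ih => exact ih
  | necCbox B h ih => exact ih
  | necUpd U e hU h ih => exact wf_updF' hU e ih
  | updAtom U e hU p =>
      obtain ⟨n1, f1, p1, q1, d1⟩ := id hU
      exact wf_biImp.2 ⟨wf_updF' hU e trivial, wf_imp.2 ⟨p1 e, q1 e p⟩⟩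
  | updNeg U e hU φ hφ =>
      obtain ⟨n1, f1, p1, q1, d1⟩ := id hU
      exact wf_biImp.2 ⟨wf_updF' hU e hφ,
        wf_imp.2 ⟨p1 e, wf_neg.2 (wf_updF' hU e hφ)⟩⟩
  | updAnd U e hU φ ψ hφ hψ =>
      exact wf_biImp.2 ⟨wf_updF' hU e ⟨hφ, hψ⟩, wf_updF' hU e hφ, wf_updF' hU e hψ⟩
  | updBox U e hU a φ hφ lf hlf =>
      obtain ⟨n1, f1, p1, q1, d1⟩ := id hU
      refine wf_biImp.2 ⟨wf_updF' hU e hφ, wf_imp.2 ⟨p1 e, wf_bigAnd.2 ?_⟩⟩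
      intro χ hχ
      simp only [List.mem_map] at hχ
      obtain ⟨f, -, rfl⟩ := hχ
      exact wf_updF' hU f hφ
  | updComp U e U' e' hU hU' φ hφ =>
      exact wf_biImp.2 ⟨wf_updF' hU e (wf_updF' hU' e' hφ),
        wf_updF' (Upd.comp_wf hU hU') (e, e') hφ⟩
  | mix B lB hlB φ hφ =>
      refine wf_imp.2 ⟨wf_cbox.2 hφ, wf_and.2 ⟨hφ, wf_bigAnd.2 ?_⟩⟩
      intro χ hχ
      simp only [List.mem_map] at hχ
      obtain ⟨a, -, rfl⟩ := hχ
      exact hφ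
  | induc B lB hlB φ hφ =>
      refine wf_imp.2 ⟨wf_cbox.2 (wf_imp.2 ⟨hφ, wf_bigAnd.2 ?_⟩),
        wf_imp.2 ⟨hφ, wf_cbox.2 hφ⟩⟩
      intro χ hχ
      simp only [List.mem_map] at hχ
      obtain ⟨a, -, rfl⟩ := hχ
      exact hφ
  | updCK U e hU B φ hφ χ hχ h1 h2 ih1 ih2 =>
      exact ⟨hχ e, wf_updF' hU e hφ⟩

end UM

namespace UM

variable {A P : Type}

/-! ### Propositional templates and basic Hilbert-style machinery -/

instance {n : ℕ} (t : PropForm n) : Decidable t.Taut :=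
  inferInstanceAs (Decidable (∀ v, _ = true))

namespace PF
def imp {n} (t u : PropForm n) : PropForm n := .neg (.and t (.neg u))
def or {n} (t u : PropForm n) : PropForm n := .neg (.and (.neg t) (.neg u))
def biImp {n} (t u : PropForm n) : PropForm n := .and (imp t u) (imp u t)
abbrev X0 {n} : PropForm (n+1) := .var ⟨0, by omega⟩
abbrev X1 {n} : PropForm (n+2) := .var ⟨1, by omega⟩
abbrev X2 {n} : PropForm (n+3) := .var ⟨2, by omega⟩
abbrev X3 {n} : PropForm (n+4) := .var ⟨3, by omega⟩
end PF

def v1 (φ : Form A P) : Fin 1 → Form A P := fun _ => φ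

def v2 (φ ψ : Form A P) : Fin 2 → Form A P := fun i =>
  match i with
  | ⟨0, _⟩ => φ
  | ⟨_+1, _⟩ => ψ

def v3 (φ ψ χ : Form A P) : Fin 3 → Form A P := fun i =>
  match i with
  | ⟨0, _⟩ => φ
  | ⟨1, _⟩ => ψ
  | ⟨_+2, _⟩ => χ

def v4 (φ ψ χ ξ : Form A P) : Fin 4 → Form A P := fun i =>
  match i with
  | ⟨0, _⟩ => φ
  | ⟨1, _⟩ => ψ
  | ⟨2, _⟩ => χ
  | ⟨_+3, _⟩ => ξ

lemma v1wf {φ : Form A P} (h : φ.WF) : ∀ i, ((v1 φ) i).WF := fun _ => h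

lemma v2wf {φ ψ : Form A P} (h1 : φ.WF) (h2 : ψ.WF) : ∀ i, ((v2 φ ψ) i).WF := by
  rintro ⟨i, hi⟩
  match i with
  | 0 => exact h1
  | n+1 => exact h2

lemma v3wf {φ ψ χ : Form A P} (h1 : φ.WF) (h2 : ψ.WF) (h3 : χ.WF) :
    ∀ i, ((v3 φ ψ χ) i).WF := by
  rintro ⟨i, hi⟩
  match i with
  | 0 => exact h1
  | 1 => exact h2
  | n+2 => exact h3

lemma v4wf {φ ψ χ ξ : Form A P} (h1 : φ.WF) (h2 : ψ.WF) (h3 : χ.WF) (h4 : ξ.WF) :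
    ∀ i, ((v4 φ ψ χ ξ) i).WF := by
  rintro ⟨i, hi⟩
  match i with
  | 0 => exact h1
  | 1 => exact h2
  | 2 => exact h3
  | n+3 => exact h4

open PF

lemma dTaut1 (t : PropForm 1) (ht : t.Taut) {φ : Form A P} (h1 : φ.WF) :
    Deriv (t.subst (v1 φ)) :=
  Deriv.taut t (v1 φ) ht (v1wf h1)

lemma dTaut2 (t : PropForm 2) (ht : t.Taut) {φ ψ : Form A P} (h1 : φ.WF) (h2 : ψ.WF) :
    Deriv (t.subst (v2 φ ψ)) :=
  Deriv.taut t (v2 φ ψ) ht (v2wf h1 h2)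

lemma dTaut3 (t : PropForm 3) (ht : t.Taut) {φ ψ χ : Form A P} (h1 : φ.WF) (h2 : ψ.WF)
    (h3 : χ.WF) : Deriv (t.subst (v3 φ ψ χ)) :=
  Deriv.taut t (v3 φ ψ χ) ht (v3wf h1 h2 h3)

lemma dTaut4 (t : PropForm 4) (ht : t.Taut) {φ ψ χ ξ : Form A P} (h1 : φ.WF) (h2 : ψ.WF)
    (h3 : χ.WF) (h4 : ξ.WF) : Deriv (t.subst (v4 φ ψ χ ξ)) :=
  Deriv.taut t (v4 φ ψ χ ξ) ht (v4wf h1 h2 h3 h4)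

/-! ### Basic derived rules -/

lemma dImpSelf {φ : Form A P} (h : φ.WF) : Deriv (φ ⟶ φ) :=
  dTaut1 (imp X0 X0) (by decide) h

lemma dMP2 {φ ψ χ : Form A P} (h : Deriv (φ ⟶ ψ ⟶ χ)) (h1 : Deriv φ) (h2 : Deriv ψ) :
    Deriv χ :=
  Deriv.mp (Deriv.mp h h1) h2

lemma dWeaken {φ ψ : Form A P} (hφ : φ.WF) (h : Deriv ψ) : Deriv (φ ⟶ ψ) :=
  Deriv.mp (dTaut2 (imp X0 (imp X1 X0)) (by decide) (derivWF h) hφ) h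

lemma dImpTrans {φ ψ χ : Form A P} (h1 : Deriv (φ ⟶ ψ)) (h2 : Deriv (ψ ⟶ χ)) :
    Deriv (φ ⟶ χ) := by
  obtain ⟨hφ, hψ⟩ := wf_imp.1 (derivWF h1)
  obtain ⟨-, hχ⟩ := wf_imp.1 (derivWF h2)
  exact dMP2 (dTaut3 (imp (imp X0 X1) (imp (imp X1 X2) (imp X0 X2))) (by decide)
    hφ hψ hχ) h1 h2

lemma dAndIntro {φ ψ : Form A P} (h1 : Deriv φ) (h2 : Deriv ψ) : Deriv (φ ⋏ ψ) :=
  dMP2 (dTaut2 (imp X0 (imp X1 (.and X0 X1))) (by decide) (derivWF h1) (derivWF h2)) h1 h2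

lemma dAndL {φ ψ : Form A P} (h : Deriv (φ ⋏ ψ)) : Deriv φ := by
  obtain ⟨hφ, hψ⟩ := wf_and.1 (derivWF h)
  exact Deriv.mp (dTaut2 (imp (.and X0 X1) X0) (by decide) hφ hψ) h

lemma dAndR {φ ψ : Form A P} (h : Deriv (φ ⋏ ψ)) : Deriv ψ := by
  obtain ⟨hφ, hψ⟩ := wf_and.1 (derivWF h)
  exact Deriv.mp (dTaut2 (imp (.and X0 X1) X1) (by decide) hφ hψ) h

lemma dBiImpL {φ ψ : Form A P} (h : Deriv (φ ⟷ ψ)) : Deriv (φ ⟶ ψ) := dAndL h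
lemma dBiImpR {φ ψ : Form A P} (h : Deriv (φ ⟷ ψ)) : Deriv (ψ ⟶ φ) := dAndR h

lemma dBiImpIntro {φ ψ : Form A P} (h1 : Deriv (φ ⟶ ψ)) (h2 : Deriv (ψ ⟶ φ)) :
    Deriv (φ ⟷ ψ) := dAndIntro h1 h2

end UM

namespace UM

variable {A P : Type}

open PF

/-! ### More propositional derived rules -/

lemma dTop : Deriv (⊤' : Form A P) := dTaut1 .top (by decide) (wf_top (P := P))

lemma dEFQ {φ : Form A P} (h : φ.WF) : Deriv (⊥' ⟶ φ) :=
  dTaut1 (imp .bot X0) (by decide) h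

lemma dImpAnd {δ φ ψ : Form A P} (h1 : Deriv (δ ⟶ φ)) (h2 : Deriv (δ ⟶ ψ)) :
    Deriv (δ ⟶ φ ⋏ ψ) := by
  obtain ⟨hδ, hφ⟩ := wf_imp.1 (derivWF h1)
  obtain ⟨-, hψ⟩ := wf_imp.1 (derivWF h2)
  exact dMP2 (dTaut3 (imp (imp X0 X1) (imp (imp X0 X2) (imp X0 (.and X1 X2))))
    (by decide) hδ hφ hψ) h1 h2

lemma dAndElimL {φ ψ : Form A P} (h1 : φ.WF) (h2 : ψ.WF) : Deriv (φ ⋏ ψ ⟶ φ) :=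
  dTaut2 (imp (.and X0 X1) X0) (by decide) h1 h2

lemma dAndElimR {φ ψ : Form A P} (h1 : φ.WF) (h2 : ψ.WF) : Deriv (φ ⋏ ψ ⟶ ψ) :=
  dTaut2 (imp (.and X0 X1) X1) (by decide) h1 h2

lemma dCurry {φ ψ χ : Form A P} (h : Deriv ((φ ⋏ ψ) ⟶ χ)) : Deriv (φ ⟶ ψ ⟶ χ) := by
  obtain ⟨⟨hφ, hψ⟩, hχ⟩ := wf_imp.1 (derivWF h)
  exact Deriv.mp (dTaut3 (imp (imp (.and X0 X1) X2) (imp X0 (imp X1 X2)))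
    (by decide) hφ hψ hχ) h

lemma dUncurry {φ ψ χ : Form A P} (h : Deriv (φ ⟶ ψ ⟶ χ)) : Deriv ((φ ⋏ ψ) ⟶ χ) := by
  obtain ⟨hφ, h'⟩ := wf_imp.1 (derivWF h)
  obtain ⟨hψ, hχ⟩ := wf_imp.1 h'
  exact Deriv.mp (dTaut3 (imp (imp X0 (imp X1 X2)) (imp (.and X0 X1) X2))
    (by decide) hφ hψ hχ) h

lemma dSwap {φ ψ χ : Form A P} (h : Deriv (φ ⟶ ψ ⟶ χ)) : Deriv (ψ ⟶ φ ⟶ χ) := by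
  obtain ⟨hφ, h'⟩ := wf_imp.1 (derivWF h)
  obtain ⟨hψ, hχ⟩ := wf_imp.1 h'
  exact Deriv.mp (dTaut3 (imp (imp X0 (imp X1 X2)) (imp X1 (imp X0 X2)))
    (by decide) hφ hψ hχ) h

lemma dMPU {δ φ ψ : Form A P} (h1 : Deriv (δ ⟶ φ ⟶ ψ)) (h2 : Deriv (δ ⟶ φ)) :
    Deriv (δ ⟶ ψ) := by
  obtain ⟨hδ, h'⟩ := wf_imp.1 (derivWF h1)
  obtain ⟨hφ, hψ⟩ := wf_imp.1 h'
  exact dMP2 (dTaut3 (imp (imp X0 (imp X1 X2)) (imp (imp X0 X1) (imp X0 X2)))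
    (by decide) hδ hφ hψ) h1 h2

lemma dAbsurd {δ φ ψ : Form A P} (h1 : Deriv (δ ⟶ φ)) (h2 : Deriv (δ ⟶ ∼φ))
    (hψ : ψ.WF) : Deriv (δ ⟶ ψ) := by
  obtain ⟨hδ, hφ⟩ := wf_imp.1 (derivWF h1)
  exact dMP2 (dTaut3 (imp (imp X0 X1) (imp (imp X0 (.neg X1)) (imp X0 X2)))
    (by decide) hδ hφ hψ) h1 h2

lemma dContra {φ ψ : Form A P} (h : Deriv (φ ⟶ ψ)) : Deriv (∼ψ ⟶ ∼φ) := by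
  obtain ⟨hφ, hψ⟩ := wf_imp.1 (derivWF h)
  exact Deriv.mp (dTaut2 (imp (imp X0 X1) (imp (.neg X1) (.neg X0))) (by decide) hφ hψ) h

lemma dContraNeg {φ ψ : Form A P} (h : Deriv (∼φ ⟶ ψ)) : Deriv (∼ψ ⟶ φ) := by
  obtain ⟨hφ, hψ⟩ := wf_imp.1 (derivWF h)
  exact Deriv.mp (dTaut2 (imp (imp (.neg X0) X1) (imp (.neg X1) X0)) (by decide) hφ hψ) h

lemma dNegIntro {φ ψ : Form A P} (h : Deriv (φ ⟶ ψ)) (h2 : Deriv (φ ⟶ ∼ψ)) :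
    Deriv (∼φ) := by
  obtain ⟨hφ, hψ⟩ := wf_imp.1 (derivWF h)
  exact dMP2 (dTaut2 (imp (imp X0 X1) (imp (imp X0 (.neg X1)) (.neg X0)))
    (by decide) hφ hψ) h h2

lemma dNotNotElim {φ : Form A P} (h : φ.WF) : Deriv (∼∼φ ⟶ φ) :=
  dTaut1 (imp (.neg (.neg X0)) X0) (by decide) h

lemma dNotNotIntro {φ : Form A P} (h : φ.WF) : Deriv (φ ⟶ ∼∼φ) :=
  dTaut1 (imp X0 (.neg (.neg X0))) (by decide) h

lemma dOrIntroL {φ ψ : Form A P} (h1 : φ.WF) (h2 : ψ.WF) : Deriv (φ ⟶ φ ⋎ ψ) :=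
  dTaut2 (imp X0 (PF.or X0 X1)) (by decide) h1 h2

lemma dOrIntroR {φ ψ : Form A P} (h1 : φ.WF) (h2 : ψ.WF) : Deriv (ψ ⟶ φ ⋎ ψ) :=
  dTaut2 (imp X1 (PF.or X0 X1)) (by decide) h1 h2

lemma dOrElim {φ ψ χ : Form A P} (h1 : Deriv (φ ⟶ χ)) (h2 : Deriv (ψ ⟶ χ)) :
    Deriv ((φ ⋎ ψ) ⟶ χ) := by
  obtain ⟨hφ, hχ⟩ := wf_imp.1 (derivWF h1)
  obtain ⟨hψ, -⟩ := wf_imp.1 (derivWF h2)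
  exact dMP2 (dTaut3 (imp (imp X0 X2) (imp (imp X1 X2) (imp (PF.or X0 X1) X2)))
    (by decide) hφ hψ hχ) h1 h2

lemma dImpOfNeg {φ ψ : Form A P} (h : Deriv (∼φ)) (hψ : ψ.WF) : Deriv (φ ⟶ ψ) := by
  have hφ := wf_neg.1 (derivWF h)
  exact Deriv.mp (dTaut2 (imp (.neg X0) (imp X0 X1)) (by decide) hφ hψ) h

lemma dImpNegSwap {φ ψ : Form A P} (h : Deriv (φ ⟶ ∼ψ)) : Deriv (ψ ⟶ ∼φ) := by
  obtain ⟨hφ, hψ⟩ := wf_imp.1 (derivWF h)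
  exact Deriv.mp (dTaut2 (imp (imp X0 (.neg X1)) (imp X1 (.neg X0))) (by decide) hφ hψ) h

lemma dDNE {φ : Form A P} (h : Deriv (∼∼φ)) : Deriv φ :=
  Deriv.mp (dNotNotElim (wf_neg.1 (wf_neg.1 (derivWF h)))) h

lemma dNotOfImpBot {φ : Form A P} (h : Deriv (φ ⟶ ⊥')) : Deriv (∼φ) := by
  obtain ⟨hφ, -⟩ := wf_imp.1 (derivWF h)
  exact Deriv.mp (dTaut1 (imp (imp X0 .bot) (.neg X0)) (by decide) hφ) h

lemma dImpBotOfNot {φ : Form A P} (h : Deriv (∼φ)) : Deriv (φ ⟶ ⊥') := by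
  have hφ := wf_neg.1 (derivWF h)
  exact Deriv.mp (dTaut1 (imp (.neg X0) (imp X0 .bot)) (by decide) hφ) h

/-! ### bigAnd / bigOr lemmas -/

lemma dBigAndElim {l : List (Form A P)} (hl : ∀ χ ∈ l, χ.WF) {ψ : Form A P}
    (hmem : ψ ∈ l) : Deriv (bigAnd l ⟶ ψ) := by
  induction l with
  | nil => cases hmem
  | cons χ l ih =>
      have hχ := hl χ (List.mem_cons_self)
      have hl' : ∀ χ ∈ l, Form.WF χ := fun x hx => hl x (List.mem_cons_of_mem _ hx)
      have hbl : (bigAnd l).WF := wf_bigAnd.2 hl'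
      rcases List.mem_cons.1 hmem with rfl | hmem'
      · exact dAndElimL hχ hbl
      · exact dImpTrans (dAndElimR hχ hbl) (ih hl' hmem')

lemma dBigAndIntro {δ : Form A P} {l : List (Form A P)}
    (h : ∀ χ ∈ l, Deriv (δ ⟶ χ)) (hδ : δ.WF) : Deriv (δ ⟶ bigAnd l) := by
  induction l with
  | nil => exact dWeaken hδ dTop
  | cons χ l ih =>
      exact dImpAnd (h χ (List.mem_cons_self))
        (ih fun x hx => h x (List.mem_cons_of_mem _ hx))

lemma dBigOrIntro {l : List (Form A P)} (hl : ∀ χ ∈ l, χ.WF) {ψ : Form A P}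
    (hmem : ψ ∈ l) : Deriv (ψ ⟶ bigOr l) := by
  induction l with
  | nil => cases hmem
  | cons χ l ih =>
      have hχ := hl χ (List.mem_cons_self)
      have hl' : ∀ χ ∈ l, Form.WF χ := fun x hx => hl x (List.mem_cons_of_mem _ hx)
      have hbl : (bigOr l).WF := wf_bigOr.2 hl'
      rcases List.mem_cons.1 hmem with rfl | hmem'
      · exact dOrIntroL hχ hbl
      · exact dImpTrans (ih hl' hmem') (dOrIntroR hχ hbl)

lemma dBigOrElim {l : List (Form A P)} {χ : Form A P}
    (h : ∀ ψ ∈ l, Deriv (ψ ⟶ χ)) (hχ : χ.WF) (hl : ∀ ψ ∈ l, ψ.WF) :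
    Deriv (bigOr l ⟶ χ) := by
  induction l with
  | nil => exact dEFQ hχ
  | cons ψ l ih =>
      exact dOrElim (h ψ (List.mem_cons_self))
        (ih (fun x hx => h x (List.mem_cons_of_mem _ hx))
          (fun x hx => hl x (List.mem_cons_of_mem _ hx)))

end UM

namespace UM

variable {A P : Type}

open PF

/-! ### Modal derived rules -/

lemma dBiImpMP {φ ψ : Form A P} (h : Deriv (φ ⟷ ψ)) (h1 : Deriv φ) : Deriv ψ :=
  Deriv.mp (dBiImpL h) h1

lemma dBiImpSymm {φ ψ : Form A P} (h : Deriv (φ ⟷ ψ)) : Deriv (ψ ⟷ φ) :=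
  dAndIntro (dAndR h) (dAndL h)

lemma dBiImpTrans {φ ψ χ : Form A P} (h1 : Deriv (φ ⟷ ψ)) (h2 : Deriv (ψ ⟷ χ)) :
    Deriv (φ ⟷ χ) :=
  dAndIntro (dImpTrans (dBiImpL h1) (dBiImpL h2)) (dImpTrans (dBiImpR h2) (dBiImpR h1))

lemma dBoxMono {a : A} {φ ψ : Form A P} (h : Deriv (φ ⟶ ψ)) :
    Deriv (Form.box a φ ⟶ Form.box a ψ) := by
  obtain ⟨hφ, hψ⟩ := wf_imp.1 (derivWF h)
  exact Deriv.mp (Deriv.distBox a φ ψ hφ hψ) (Deriv.necBox a h)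

lemma dCboxMono {B : Set A} {φ ψ : Form A P} (h : Deriv (φ ⟶ ψ)) :
    Deriv (Form.cbox B φ ⟶ Form.cbox B ψ) := by
  obtain ⟨hφ, hψ⟩ := wf_imp.1 (derivWF h)
  exact Deriv.mp (Deriv.distCbox B φ ψ hφ hψ) (Deriv.necCbox B h)

lemma dUpdMono {U : Upd A P} {e : U.E} (hU : U.WF) {φ ψ : Form A P}
    (h : Deriv (φ ⟶ ψ)) : Deriv (Form.updF U e φ ⟶ Form.updF U e ψ) := by
  obtain ⟨hφ, hψ⟩ := wf_imp.1 (derivWF h)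
  exact Deriv.mp (Deriv.distUpd U e hU φ ψ hφ hψ) (Deriv.necUpd U e hU h)

lemma dBoxCongr {a : A} {φ ψ : Form A P} (h : Deriv (φ ⟷ ψ)) :
    Deriv (Form.box a φ ⟷ Form.box a ψ) :=
  dAndIntro (dBoxMono (dAndL h)) (dBoxMono (dAndR h))

lemma dUpdCongr {U : Upd A P} {e : U.E} (hU : U.WF) {φ ψ : Form A P}
    (h : Deriv (φ ⟷ ψ)) : Deriv (Form.updF U e φ ⟷ Form.updF U e ψ) :=
  dAndIntro (dUpdMono hU (dAndL h)) (dUpdMono hU (dAndR h))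

lemma dBoxAndIntro {a : A} {δ φ ψ : Form A P} (h1 : Deriv (δ ⟶ Form.box a φ))
    (h2 : Deriv (δ ⟶ Form.box a ψ)) : Deriv (δ ⟶ Form.box a (φ ⋏ ψ)) := by
  obtain ⟨hδ, hφ⟩ := wf_imp.1 (derivWF h1)
  obtain ⟨-, hψ⟩ := wf_imp.1 (derivWF h2)
  have hφ' : φ.WF := wf_box.1 hφ
  have hψ' : ψ.WF := wf_box.1 hψ
  have t : Deriv (φ ⟶ ψ ⟶ (φ ⋏ ψ)) :=
    dTaut2 (imp X0 (imp X1 (.and X0 X1))) (by decide) hφ' hψ'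
  have b1 : Deriv (Form.box a φ ⟶ Form.box a (ψ ⟶ (φ ⋏ ψ))) := dBoxMono t
  have b2 : Deriv (Form.box a (ψ ⟶ (φ ⋏ ψ)) ⟶ (Form.box a ψ ⟶ Form.box a (φ ⋏ ψ))) :=
    Deriv.distBox a ψ (φ ⋏ ψ) hψ' ⟨hφ', hψ'⟩
  exact dMPU (dImpTrans (dImpTrans h1 b1) b2) h2

lemma dBoxBigAnd {a : A} {δ : Form A P} {l : List (Form A P)} (hδ : δ.WF)
    (h : ∀ χ ∈ l, Deriv (δ ⟶ Form.box a χ)) : Deriv (δ ⟶ Form.box a (bigAnd l)) := by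
  induction l with
  | nil => exact dWeaken hδ (Deriv.necBox a dTop)
  | cons χ l ih =>
      exact dBoxAndIntro (h χ (List.mem_cons_self))
        (ih fun x hx => h x (List.mem_cons_of_mem _ hx))

/-! ### Derived update laws -/

lemma wf_pre {U : Upd A P} (hU : U.WF) (e : U.E) : (U.pre e).WF := hU.2.2.1 e
lemma wf_post {U : Upd A P} (hU : U.WF) (e : U.E) (p : P) : (U.post e p).WF :=
  hU.2.2.2.1 e p

lemma dUpdTop {U : Upd A P} (hU : U.WF) (e : U.E) : Deriv (Form.updF U e ⊤') :=
  Deriv.necUpd U e hU dTop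

/-- `⊢ ¬pre(e) → [U,e]φ` -/
lemma dNegPre {U : Upd A P} (hU : U.WF) (e : U.E) {φ : Form A P} (hφ : φ.WF) :
    Deriv (∼(U.pre e) ⟶ Form.updF U e φ) := by
  have hpre := wf_pre hU e
  have c1 : Deriv (Form.updF U e φ ⟷ Form.updF U e (∼∼φ)) :=
    dUpdCongr hU (dTaut1 (PF.biImp X0 (.neg (.neg X0))) (by decide) hφ)
  have c2 := Deriv.updNeg U e hU (∼φ) hφ
  have t : Deriv (∼(U.pre e) ⟶ (U.pre e ⟶ ∼(Form.updF U e (∼φ)))) :=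
    dTaut2 (imp (.neg X0) (imp X0 (.neg X1))) (by decide) hpre
      (wf_updF' hU e (wf_neg.2 hφ))
  exact dImpTrans (dImpTrans t (dBiImpR c2)) (dBiImpR c1)

/-- `⊢ [U,e]⊥ ↔ ¬pre(e)` -/
lemma dUpdBot {U : Upd A P} (hU : U.WF) (e : U.E) :
    Deriv (Form.updF U e ⊥' ⟷ ∼(U.pre e)) := by
  have hpre := wf_pre hU e
  have c1 : Deriv (Form.updF U e ⊥' ⟷ Form.updF U e (∼⊤')) :=
    dUpdCongr hU (dTaut1 (PF.biImp .bot (.neg .top)) (by decide) (wf_top (P := P)))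
  have c2 := Deriv.updNeg U e hU ⊤' trivial
  have hT := dUpdTop hU e
  have t : Deriv ((U.pre e ⟶ ∼(Form.updF U e ⊤')) ⟷ ∼(U.pre e)) := by
    have h' : Deriv (Form.updF U e ⊤' ⟶
        ((U.pre e ⟶ ∼(Form.updF U e ⊤')) ⟷ ∼(U.pre e))) :=
      dTaut2 (imp X1 (PF.biImp (imp X0 (.neg X1)) (.neg X0))) (by decide)
        hpre (derivWF hT)
    exact Deriv.mp h' hT
  exact dBiImpTrans (dBiImpTrans c1 c2) t

end UM

namespace UM

variable {A P : Type}

/-! ### Semantics: basic lemmas -/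

@[simp] lemma sat_atom {M : Model A P} {s : M.S} {p : P} :
    sat (Form.atom p) M s ↔ M.V p s := Iff.rfl
@[simp] lemma sat_top {M : Model A P} {s : M.S} : sat (⊤' : Form A P) M s ↔ True := Iff.rfl
@[simp] lemma sat_bot {M : Model A P} {s : M.S} : sat (⊥' : Form A P) M s ↔ False := Iff.rfl
@[simp] lemma sat_neg {M : Model A P} {s : M.S} {φ : Form A P} :
    sat (∼φ) M s ↔ ¬ sat φ M s := Iff.rfl
@[simp] lemma sat_and {M : Model A P} {s : M.S} {φ ψ : Form A P} :
    sat (φ ⋏ ψ) M s ↔ sat φ M s ∧ sat ψ M s := Iff.rfl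
@[simp] lemma sat_box {M : Model A P} {s : M.S} {a : A} {φ : Form A P} :
    sat (Form.box a φ) M s ↔ ∀ t, M.R a s t → sat φ M t := Iff.rfl
@[simp] lemma sat_cbox {M : Model A P} {s : M.S} {B : Set A} {φ : Form A P} :
    sat (Form.cbox B φ) M s ↔
      ∀ t, Relation.ReflTransGen (fun x y => ∃ a ∈ B, M.R a x y) s t → sat φ M t := Iff.rfl
@[simp] lemma sat_imp {M : Model A P} {s : M.S} {φ ψ : Form A P} :
    sat (φ ⟶ ψ) M s ↔ (sat φ M s → sat ψ M s) := by
  simp only [Form.imp, sat_neg, sat_and]; tauto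
@[simp] lemma sat_or {M : Model A P} {s : M.S} {φ ψ : Form A P} :
    sat (φ ⋎ ψ) M s ↔ (sat φ M s ∨ sat ψ M s) := by
  simp only [Form.or, sat_neg, sat_and]; tauto
@[simp] lemma sat_biImp {M : Model A P} {s : M.S} {φ ψ : Form A P} :
    sat (φ ⟷ ψ) M s ↔ (sat φ M s ↔ sat ψ M s) := by
  simp only [Form.biImp, sat_and, sat_imp]; tauto

lemma sat_updF {M : Model A P} {s : M.S} {U : Upd A P} {e : U.E} {φ : Form A P} :
    sat (Form.updF U e φ) M s ↔
      ∀ h : sat (U.pre e) M s, sat φ (M.prodUpd U) ⟨(s, e), h⟩ := Iff.rfl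

@[simp] lemma sat_bigAnd {M : Model A P} {s : M.S} {l : List (Form A P)} :
    sat (bigAnd l) M s ↔ ∀ φ ∈ l, sat φ M s := by
  induction l with
  | nil => simp [bigAnd]
  | cons φ l ih => simp [bigAnd] at ih ⊢; tauto

@[simp] lemma sat_bigOr {M : Model A P} {s : M.S} {l : List (Form A P)} :
    sat (bigOr l) M s ↔ ∃ φ ∈ l, sat φ M s := by
  induction l with
  | nil => simp [bigOr]
  | cons φ l ih =>
      have : bigOr (φ :: l) = φ ⋎ bigOr l := rfl
      rw [this, sat_or, ih, List.exists_mem_cons_iff]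

/-! ### Semantic validity of the reduction laws (except composition) -/

lemma semUpdAtom {M : Model A P} {s : M.S} {U : Upd A P} {e : U.E} {p : P} :
    sat (Form.updF U e (Form.atom p)) M s ↔
      (sat (U.pre e) M s → sat (U.post e p) M s) := by
  rw [sat_updF]
  exact ⟨fun h hp => h hp, fun h hp => h hp⟩

lemma semUpdNeg {M : Model A P} {s : M.S} {U : Upd A P} {e : U.E} {φ : Form A P} :
    sat (Form.updF U e (∼φ)) M s ↔
      (sat (U.pre e) M s → ¬ sat (Form.updF U e φ) M s) := by
  rw [sat_updF]
  constructor
  · intro h hp hc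
    exact h hp (hc hp)
  · intro h hp
    exact fun hc => h hp (fun _ => hc)

lemma semUpdAnd {M : Model A P} {s : M.S} {U : Upd A P} {e : U.E} {φ ψ : Form A P} :
    sat (Form.updF U e (φ ⋏ ψ)) M s ↔
      (sat (Form.updF U e φ) M s ∧ sat (Form.updF U e ψ) M s) := by
  rw [sat_updF]
  constructor
  · exact fun h => ⟨fun hp => (h hp).1, fun hp => (h hp).2⟩
  · exact fun h hp => ⟨h.1 hp, h.2 hp⟩

lemma semUpdBox {M : Model A P} {s : M.S} {U : Upd A P} {e : U.E} {a : A} {φ : Form A P} :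
    sat (Form.updF U e (Form.box a φ)) M s ↔
      (sat (U.pre e) M s →
        ∀ f, U.rel a e f → sat (Form.box a (Form.updF U f φ)) M s) := by
  rw [sat_updF]
  constructor
  · intro h hp f hef
    rw [sat_box]
    intro t hst
    rw [sat_updF]
    intro hpf
    exact (h hp) ⟨(t, f), hpf⟩ ⟨hst, hef⟩
  · intro h hp
    erw [sat_box]
    rintro ⟨⟨t, f⟩, hpf⟩ ⟨hst, hef⟩
    exact (h hp f hef t hst) hpf

lemma semUpdBot {M : Model A P} {s : M.S} {U : Upd A P} {e : U.E} :
    sat (Form.updF U e ⊥') M s ↔ ¬ sat (U.pre e) M s := by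
  rw [sat_updF]
  exact ⟨fun h hp => h hp, fun h hp => absurd hp h⟩

lemma semUpdTop {M : Model A P} {s : M.S} {U : Upd A P} {e : U.E} :
    sat (Form.updF U e ⊤') M s := by
  rw [sat_updF]; intro h; trivial

end UM

namespace UM

variable {A P : Type}

/-! ### Isomorphisms of models and invariance of satisfaction -/

structure Iso (M N : Model A P) where
  F : M.S → N.S
  bij : Function.Bijective F
  hR : ∀ a s t, M.R a s t ↔ N.R a (F s) (F t)
  hV : ∀ p s, M.V p s ↔ N.V p (F s)

lemma Iso.rtg {M N : Model A P} (I : Iso M N) {B : Set A} {s t : M.S}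
    (h : Relation.ReflTransGen (fun x y => ∃ a ∈ B, M.R a x y) s t) :
    Relation.ReflTransGen (fun x y => ∃ a ∈ B, N.R a x y) (I.F s) (I.F t) := by
  induction h with
  | refl => exact Relation.ReflTransGen.refl
  | tail hab hbc ih =>
      obtain ⟨a, haB, hR⟩ := hbc
      exact ih.tail ⟨a, haB, (I.hR a _ _).1 hR⟩

lemma Iso.rtg_back {M N : Model A P} (I : Iso M N) {B : Set A} {s : M.S} {u : N.S}
    (h : Relation.ReflTransGen (fun x y => ∃ a ∈ B, N.R a x y) (I.F s) u) :
    ∃ t : M.S, I.F t = u ∧ Relation.ReflTransGen (fun x y => ∃ a ∈ B, M.R a x y) s t := by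
  induction h with
  | refl => exact ⟨s, rfl, Relation.ReflTransGen.refl⟩
  | @tail b c hab hbc ih =>
      obtain ⟨t, rfl, ht⟩ := ih
      obtain ⟨a, haB, hR⟩ := hbc
      obtain ⟨u', rfl⟩ := I.bij.2 c
      exact ⟨u', rfl, ht.tail ⟨a, haB, (I.hR a _ _).2 hR⟩⟩

lemma Iso.sat_iff {φ : Form A P} :
    ∀ {M N : Model A P} (I : Iso M N) (s : M.S), sat φ M s ↔ sat φ N (I.F s) := by
  induction φ with
  | atom p => exact fun I s => I.hV p s
  | top => intro M N I s; simp
  | bot => intro M N I s; simp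
  | neg φ ih => intro M N I s; simpa [sat_neg] using (ih I s).not
  | and φ ψ ih1 ih2 => intro M N I s; simp [sat_and, ih1 I s, ih2 I s]
  | box a φ ih =>
      intro M N I s
      simp only [sat_box]
      constructor
      · intro h t' hR
        obtain ⟨t, rfl⟩ := I.bij.2 t'
        exact (ih I t).1 (h t ((I.hR a s t).2 hR))
      · intro h t hR
        exact (ih I t).2 (h (I.F t) ((I.hR a s t).1 hR))
  | cbox B φ ih =>
      intro M N I s
      simp only [sat_cbox]
      constructor
      · intro h u hu
        obtain ⟨t, rfl, ht⟩ := I.rtg_back hu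
        exact (ih I t).1 (h t ht)
      · intro h t ht
        exact (ih I t).2 (h (I.F t) (I.rtg ht))
  | upd E rel pre post e φ ihpre ihpost ihφ =>
      intro M N I s
      -- the induced isomorphism on product models
      have preiff : ∀ (f : E) (t : M.S), sat (pre f) M t ↔ sat (pre f) N (I.F t) :=
        fun f t => ihpre f I t
      let MP := prodM M E rel (fun f t => sat (pre f) M t) (fun f t p => sat (post f p) M t)
      let NP := prodM N E rel (fun f t => sat (pre f) N t) (fun f t p => sat (post f p) N t)
      let F' : MP.S → NP.S := fun x => ⟨(I.F x.1.1, x.1.2), (preiff _ _).1 x.2⟩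
      have hinj : Function.Injective F' := by
        rintro ⟨⟨t, f⟩, h1⟩ ⟨⟨u, g⟩, h2⟩ h
        have h' := congrArg Subtype.val h
        have e1 : t = u := I.bij.1 (congrArg Prod.fst h')
        have e2 : f = g := congrArg Prod.snd h'
        subst e1; subst e2; rfl
      have hsurj : Function.Surjective F' := by
        rintro ⟨⟨u, f⟩, h⟩
        obtain ⟨t, rfl⟩ := I.bij.2 u
        exact ⟨⟨(t, f), (preiff f t).2 h⟩, rfl⟩
      let I' : Iso MP NP :=
        { F := F'
          bij := ⟨hinj, hsurj⟩
          hR := by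
            rintro a ⟨⟨t, f⟩, h1⟩ ⟨⟨u, g⟩, h2⟩
            simp only [prodM, MP, NP, F']
            rw [I.hR a t u]
          hV := by
            rintro p ⟨⟨t, f⟩, h1⟩
            exact ihpost f p I t }
      constructor
      · intro h hpre
        have := (ihφ I' ⟨(s, e), (preiff e s).2 hpre⟩).1 (h ((preiff e s).2 hpre))
        exact this
      · intro h hpre
        exact (ihφ I' ⟨(s, e), hpre⟩).2 (h ((preiff e s).1 hpre))

/-! ### Semantic validity of the composition law -/

lemma sat_pre_comp {M : Model A P} {U U' : Upd A P} {f : U.E} {f' : U'.E} {t : M.S} :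
    sat ((U.comp U').pre (f, f')) M t ↔
      ∃ h : sat (U.pre f) M t, sat (U'.pre f') (M.prodUpd U) ⟨(t, f), h⟩ := by
  constructor
  · rintro ⟨h1, h2⟩
    exact ⟨h1, h2 h1⟩
  · rintro ⟨h1, h2⟩
    exact ⟨h1, fun hh => h2⟩

lemma semUpdComp {U U' : Upd A P} {e : U.E} {e' : U'.E} {φ : Form A P} {M : Model A P}
    {s : M.S} :
    sat (Form.updF U e (Form.updF U' e' φ)) M s ↔
      sat (Form.updF (U.comp U') (e, e') φ) M s := by
  let N1 := M.prodUpd (U.comp U')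
  let N2 := (M.prodUpd U).prodUpd U'
  have hpre12 : ∀ x : N1.S, sat (U.pre x.1.2.1) M x.1.1 := fun x => x.2.1
  have hpre2 : ∀ x : N1.S,
      sat (U'.pre x.1.2.2) (M.prodUpd U) ⟨(x.1.1, x.1.2.1), hpre12 x⟩ :=
    fun x => x.2.2 (hpre12 x)
  let F : N1.S → N2.S := fun x =>
    ⟨(⟨(x.1.1, x.1.2.1), hpre12 x⟩, x.1.2.2), hpre2 x⟩
  have hinj : Function.Injective F := by
    rintro ⟨⟨t, f, f'⟩, h1⟩ ⟨⟨u, g, g'⟩, h2⟩ h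
    have h' := congrArg Subtype.val h
    simp only [F] at h'
    have e1 : t = u := congrArg (fun z => z.1.1.1) h'
    have e2 : f = g := congrArg (fun z => z.1.1.2) h'
    have e3 : f' = g' := congrArg (fun z => z.2) h'
    subst e1; subst e2; subst e3
    rfl
  have hsurj : Function.Surjective F := by
    rintro ⟨⟨⟨⟨t, f⟩, hf⟩, f'⟩, h'⟩
    refine ⟨⟨(t, (f, f')), ⟨hf, fun hh => h'⟩⟩, rfl⟩
  let I : Iso N1 N2 :=
    { F := F
      bij := ⟨hinj, hsurj⟩
      hR := by
        rintro a ⟨⟨t, f, f'⟩, h1⟩ ⟨⟨u, g, g'⟩, h2⟩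
        show (M.R a t u ∧ U.rel a f g ∧ U'.rel a f' g') ↔
          ((M.R a t u ∧ U.rel a f g) ∧ U'.rel a f' g')
        tauto
      hV := by
        rintro p ⟨⟨t, f, f'⟩, h1⟩
        show sat ((U.comp U').post (f, f') p) M t ↔
          sat (U'.post f' p) (M.prodUpd U) ⟨(t, f), _⟩
        by_cases hc : U'.post f' p = Form.atom p
        · rw [show (U.comp U').post (f, f') p = U.post f p from if_pos hc, hc]
          exact Iff.rfl
        · rw [show (U.comp U').post (f, f') p = Form.updF U f (U'.post f' p) from
            if_neg hc]
          constructor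
          · intro h
            exact h h1.1
          · intro h hh
            exact h }
  erw [sat_updF, sat_updF]
  constructor
  · intro h h''
    have h1 : sat (U.pre e) M s := h''.1
    have h2 : sat (U'.pre e') (M.prodUpd U) ⟨(s, e), h1⟩ := h''.2 h1
    have := (h h1) h2
    exact (I.sat_iff ⟨(s, (e, e')), h''⟩).2 this
  · intro h h1
    erw [sat_updF]
    intro h2
    have h'' : sat ((U.comp U').pre (e, e')) M s := ⟨h1, fun hh => h2⟩
    exact (I.sat_iff ⟨(s, (e, e')), h''⟩).1 (h h'')

end UM

namespace UM

variable {A P : Type}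

/-! ### The complexity measure -/

noncomputable def meas : Form A P → ℕ
  | .atom _ => 1
  | .top => 1
  | .bot => 1
  | .neg φ => 1 + meas φ
  | .and φ ψ => 1 + meas φ + meas ψ
  | .box _ φ => 1 + meas φ
  | .cbox _ φ => 1 + meas φ
  | .upd E _ pre post _ φ =>
      (sSup {x | ∃ f : E, x = meas (pre f) + sSup {y | ∃ p, y = meas (post f p)}} + 2)
        * meas φ

noncomputable def pmeas (U : Upd A P) (f : U.E) : ℕ :=
  sSup {y | ∃ p, y = meas (U.post f p)}

noncomputable def umeas (U : Upd A P) : ℕ :=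
  sSup {x | ∃ f : U.E, x = meas (U.pre f) + pmeas U f}

lemma meas_updF {U : Upd A P} {e : U.E} {φ : Form A P} :
    meas (Form.updF U e φ) = (umeas U + 2) * meas φ := rfl

lemma meas_pos (φ : Form A P) : 1 ≤ meas φ := by
  induction φ with
  | atom p => exact le_refl _
  | top => exact le_refl _
  | bot => exact le_refl _
  | neg φ ih => simp [meas]
  | and φ ψ ih1 ih2 => show 1 ≤ 1 + meas φ + meas ψ; omega
  | box a φ ih => simp [meas]
  | cbox B φ ih => simp [meas]
  | upd E rel pre post e φ ih1 ih2 ih3 =>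
      calc 1 ≤ meas φ := ih3
      _ = 1 * meas φ := (one_mul _).symm
      _ ≤ _ := Nat.mul_le_mul_right _ (by omega)

lemma pmeas_bddAbove {U : Upd A P} (hU : U.WF) (f : U.E) :
    BddAbove {y | ∃ p, y = meas (U.post f p)} := by
  obtain ⟨-, -, -, -, hfin⟩ := hU
  have : {y | ∃ p, y = meas (U.post f p)} ⊆
      insert 1 ((fun p => meas (U.post f p)) '' {p | U.post f p ≠ Form.atom p}) := by
    rintro y ⟨p, rfl⟩
    by_cases hc : U.post f p = Form.atom p
    · left; rw [hc]; rfl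
    · right; exact ⟨p, hc, rfl⟩
  exact (((hfin f).image _).insert 1).subset this |>.bddAbove

lemma meas_post_le_pmeas {U : Upd A P} (hU : U.WF) (f : U.E) (p : P) :
    meas (U.post f p) ≤ pmeas U f :=
  le_csSup (pmeas_bddAbove hU f) ⟨p, rfl⟩

lemma umeas_bddAbove {U : Upd A P} (hU : U.WF) :
    BddAbove {x | ∃ f : U.E, x = meas (U.pre f) + pmeas U f} := by
  have : Finite U.E := hU.2.1
  exact (Set.finite_range fun f : U.E => meas (U.pre f) + pmeas U f).subset
    (by rintro x ⟨f, rfl⟩; exact ⟨f, rfl⟩) |>.bddAbove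

lemma le_umeas {U : Upd A P} (hU : U.WF) (f : U.E) :
    meas (U.pre f) + pmeas U f ≤ umeas U :=
  le_csSup (umeas_bddAbove hU) ⟨f, rfl⟩

lemma meas_pre_le_umeas {U : Upd A P} (hU : U.WF) (f : U.E) :
    meas (U.pre f) ≤ umeas U :=
  le_trans (Nat.le_add_right _ _) (le_umeas hU f)

lemma pmeas_le_umeas {U : Upd A P} (hU : U.WF) (f : U.E) : pmeas U f ≤ umeas U :=
  le_trans (Nat.le_add_left _ _) (le_umeas hU f)

lemma meas_post_le_umeas {U : Upd A P} (hU : U.WF) (f : U.E) (p : P) :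
    meas (U.post f p) ≤ umeas U :=
  le_trans (meas_post_le_pmeas hU f p) (pmeas_le_umeas hU f)

/-- (I1) -/
lemma meas_pre_lt {U : Upd A P} (hU : U.WF) (e f : U.E) (φ : Form A P) :
    meas (U.pre f) < meas (Form.updF U e φ) := by
  rw [meas_updF]
  calc meas (U.pre f) ≤ umeas U := meas_pre_le_umeas hU f
  _ < (umeas U + 2) * 1 := by omega
  _ ≤ (umeas U + 2) * meas φ := Nat.mul_le_mul_left _ (meas_pos φ)

/-- (I2) -/
lemma meas_post_lt {U : Upd A P} (hU : U.WF) (e f : U.E) (p : P) (φ : Form A P) :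
    meas (U.post f p) < meas (Form.updF U e φ) := by
  rw [meas_updF]
  calc meas (U.post f p) ≤ umeas U := meas_post_le_umeas hU f p
  _ < (umeas U + 2) * 1 := by omega
  _ ≤ (umeas U + 2) * meas φ := Nat.mul_le_mul_left _ (meas_pos φ)

/-- (I3) -/
lemma meas_lt_updF {U : Upd A P} (e : U.E) (φ : Form A P) :
    meas φ < meas (Form.updF U e φ) := by
  rw [meas_updF]
  have := meas_pos φ
  calc meas φ = 1 * meas φ := (one_mul _).symm
  _ < (umeas U + 2) * meas φ := Nat.mul_lt_mul_of_lt_of_le (by omega) (le_refl _) (by omega)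

/-- (I4) -/
lemma meas_updF_lt_updF {U : Upd A P} (e f : U.E) {φ ψ : Form A P}
    (h : meas φ < meas ψ) :
    meas (Form.updF U f φ) < meas (Form.updF U e ψ) := by
  rw [meas_updF, meas_updF]
  exact Nat.mul_lt_mul_of_le_of_lt (le_refl _) h (by omega)

/-- (I5) -/
lemma meas_comp_lt {U U' : Upd A P} (hU : U.WF) (hU' : U'.WF) (e : U.E) (e' : U'.E)
    (φ : Form A P) :
    meas (Form.updF (U.comp U') (e, e') φ) < meas (Form.updF U e (Form.updF U' e' φ)) := by
  erw [meas_updF, meas_updF, meas_updF, ← Nat.mul_assoc]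
  have key : umeas (U.comp U') + 2 < (umeas U + 2) * (umeas U' + 2) := by
    have hb : umeas (U.comp U') ≤ 1 + umeas U + (umeas U + 2) * umeas U' := by
      apply csSup_le'
      rintro x ⟨⟨f, f'⟩, rfl⟩
      have hpre : meas ((U.comp U').pre (f, f')) =
          1 + meas (U.pre f) + (umeas U + 2) * meas (U'.pre f') := by
        show meas ((U.pre f) ⋏ (Form.updF U f (U'.pre f'))) = _
        show 1 + meas (U.pre f) + meas (Form.updF U f (U'.pre f')) = _
        rw [meas_updF]
      have hpost : pmeas (U.comp U') (f, f') ≤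
          pmeas U f + (umeas U + 2) * pmeas U' f' := by
        apply csSup_le'
        rintro y ⟨p, rfl⟩
        by_cases hc : U'.post f' p = Form.atom p
        · rw [show (U.comp U').post (f, f') p = U.post f p from if_pos hc]
          exact le_trans (meas_post_le_pmeas hU f p) (Nat.le_add_right _ _)
        · rw [show (U.comp U').post (f, f') p = Form.updF U f (U'.post f' p) from
            if_neg hc]
          rw [meas_updF]
          exact le_trans (Nat.mul_le_mul_left _ (meas_post_le_pmeas hU' f' p))
            (Nat.le_add_left _ _)
      rw [hpre]
      have h1 := le_umeas hU f
      have h2 := le_umeas hU' f'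
      have h3 : meas (U.pre f) + pmeas U f ≤ umeas U := h1
      have h4 : (umeas U + 2) * meas (U'.pre f') + (umeas U + 2) * pmeas U' f'
          ≤ (umeas U + 2) * umeas U' := by
        rw [← Nat.mul_add]
        exact Nat.mul_le_mul_left _ h2
      omega
    nlinarith [hb]
  have := meas_pos φ
  exact Nat.mul_lt_mul_of_lt_of_le key (le_refl _) (by omega)

/-- simple structural measure facts -/
lemma meas_neg (φ : Form A P) : meas (∼φ) = 1 + meas φ := rfl
lemma meas_and (φ ψ : Form A P) : meas (φ ⋏ ψ) = 1 + meas φ + meas ψ := rfl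
lemma meas_box (a : A) (φ : Form A P) : meas (Form.box a φ) = 1 + meas φ := rfl
lemma meas_cbox (B : Set A) (φ : Form A P) : meas (Form.cbox B φ) = 1 + meas φ := rfl

end UM

namespace UM

variable {A P : Type}

/-! ### Enumerating finite types -/

noncomputable def eL (E : Type) (hE : Finite E) : List E :=
  (@Finset.univ E (@Fintype.ofFinite E hE)).toList

lemma eL_mem {E : Type} (hE : Finite E) (x : E) : x ∈ eL E hE :=
  Finset.mem_toList.2 (@Finset.mem_univ E (@Fintype.ofFinite E hE) x)

/-! ### The closure -/

noncomputable def clo [hA : Finite A] : (φ : Form A P) → φ.WF → List (Form A P)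
  | .atom p, _ => [.atom p]
  | .top, _ => [.top]
  | .bot, _ => [.bot]
  | .neg φ, h => .neg φ :: clo φ h
  | .and φ ψ, h => .and φ ψ :: (clo φ h.1 ++ clo ψ h.2)
  | .box a φ, h => .box a φ :: clo φ h
  | .cbox B φ, h =>
      .cbox B φ :: (((eL A hA).map fun a => .box a (.cbox B φ)) ++ clo φ h)
  | .upd E rel pre post e (.atom p), h =>
      .upd E rel pre post e (.atom p) ::
        (clo (pre e) (h.2.2.1 e) ++ clo (post e p) (h.2.2.2.1 e p))
  | .upd E rel pre post e .top, h =>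
      .upd E rel pre post e .top :: clo (pre e) (h.2.2.1 e)
  | .upd E rel pre post e .bot, h =>
      .upd E rel pre post e .bot :: clo (pre e) (h.2.2.1 e)
  | .upd E rel pre post e (.neg φ), h =>
      .upd E rel pre post e (.neg φ) ::
        (clo (pre e) (h.2.2.1 e) ++
          clo (.upd E rel pre post e φ) ⟨h.1, h.2.1, h.2.2.1, h.2.2.2.1, h.2.2.2.2.1,
            h.2.2.2.2.2⟩)
  | .upd E rel pre post e (.and φ ψ), h =>
      .upd E rel pre post e (.and φ ψ) ::
        (clo (.upd E rel pre post e φ) ⟨h.1, h.2.1, h.2.2.1, h.2.2.2.1, h.2.2.2.2.1,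
            h.2.2.2.2.2.1⟩ ++
          clo (.upd E rel pre post e ψ) ⟨h.1, h.2.1, h.2.2.1, h.2.2.2.1, h.2.2.2.2.1,
            h.2.2.2.2.2.2⟩)
  | .upd E rel pre post e (.box a φ), h =>
      .upd E rel pre post e (.box a φ) ::
        (clo (pre e) (h.2.2.1 e) ++
          (((eL E h.2.1).map fun f => .box a (.upd E rel pre post f φ)) ++
            (eL E h.2.1).flatMap fun f =>
              clo (.upd E rel pre post f φ) ⟨h.1, h.2.1, h.2.2.1, h.2.2.2.1,
                h.2.2.2.2.1, h.2.2.2.2.2⟩))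
  | .upd E rel pre post e (.cbox B φ), h =>
      ((eL E h.2.1).map fun f => .upd E rel pre post f (.cbox B φ)) ++
        (((eL E h.2.1).flatMap fun f =>
            (eL A hA).map fun a => .box a (.upd E rel pre post f (.cbox B φ))) ++
          (((eL E h.2.1).flatMap fun f => clo (pre f) (h.2.2.1 f)) ++
            ((eL E h.2.1).flatMap fun f =>
              clo (.upd E rel pre post f φ) ⟨h.1, h.2.1, h.2.2.1, h.2.2.2.1,
                h.2.2.2.2.1, h.2.2.2.2.2⟩)))
  | .upd E rel pre post e (.upd E' rel' pre' post' e' φ), h =>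
      .upd E rel pre post e (.upd E' rel' pre' post' e' φ) ::
        clo (Form.updF (Upd.comp ⟨E, rel, pre, post⟩ ⟨E', rel', pre', post'⟩) (e, e') φ)
          (wf_updF' (Upd.comp_wf ⟨h.1, h.2.1, h.2.2.1, h.2.2.2.1, h.2.2.2.2.1⟩
            ⟨h.2.2.2.2.2.1, h.2.2.2.2.2.2.1, h.2.2.2.2.2.2.2.1, h.2.2.2.2.2.2.2.2.1,
              h.2.2.2.2.2.2.2.2.2.1⟩) (e, e') h.2.2.2.2.2.2.2.2.2.2)
  termination_by φ _ => meas φ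
  decreasing_by
  · show meas φ < meas (∼φ); rw [meas_neg]; omega
  · show meas φ < meas (φ ⋏ ψ); rw [meas_and]; omega
  · show meas ψ < meas (φ ⋏ ψ); rw [meas_and]; omega
  · show meas φ < meas (Form.box a φ); rw [meas_box]; omega
  · show meas φ < meas (Form.cbox B φ); rw [meas_cbox]; omega
  · exact meas_pre_lt (U := ⟨E, rel, pre, post⟩) ⟨h.1, h.2.1, h.2.2.1, h.2.2.2.1, h.2.2.2.2.1⟩ e e (Form.atom p)
  · exact meas_post_lt (U := ⟨E, rel, pre, post⟩) ⟨h.1, h.2.1, h.2.2.1, h.2.2.2.1, h.2.2.2.2.1⟩ e e p (Form.atom p)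
  · exact meas_pre_lt (U := ⟨E, rel, pre, post⟩) ⟨h.1, h.2.1, h.2.2.1, h.2.2.2.1, h.2.2.2.2.1⟩ e e Form.top
  · exact meas_pre_lt (U := ⟨E, rel, pre, post⟩) ⟨h.1, h.2.1, h.2.2.1, h.2.2.2.1, h.2.2.2.2.1⟩ e e Form.bot
  · exact meas_pre_lt (U := ⟨E, rel, pre, post⟩) ⟨h.1, h.2.1, h.2.2.1, h.2.2.2.1, h.2.2.2.2.1⟩ e e (∼φ)
  · exact meas_updF_lt_updF (U := ⟨E, rel, pre, post⟩) e e (by rw [meas_neg]; omega)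
  · exact meas_updF_lt_updF (U := ⟨E, rel, pre, post⟩) e e (by rw [meas_and]; omega)
  · exact meas_updF_lt_updF (U := ⟨E, rel, pre, post⟩) e e (by rw [meas_and]; omega)
  · exact meas_pre_lt (U := ⟨E, rel, pre, post⟩) ⟨h.1, h.2.1, h.2.2.1, h.2.2.2.1, h.2.2.2.2.1⟩ e e (Form.box a φ)
  · exact meas_updF_lt_updF (U := ⟨E, rel, pre, post⟩) e f (by rw [meas_box]; omega)
  · exact meas_pre_lt (U := ⟨E, rel, pre, post⟩) ⟨h.1, h.2.1, h.2.2.1, h.2.2.2.1, h.2.2.2.2.1⟩ e f (Form.cbox B φ)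
  · exact meas_updF_lt_updF (U := ⟨E, rel, pre, post⟩) e f (by rw [meas_cbox]; omega)
  · exact meas_comp_lt (U := ⟨E, rel, pre, post⟩) (U' := ⟨E', rel', pre', post'⟩) ⟨h.1, h.2.1, h.2.2.1, h.2.2.2.1, h.2.2.2.2.1⟩
      ⟨h.2.2.2.2.2.1, h.2.2.2.2.2.2.1, h.2.2.2.2.2.2.2.1, h.2.2.2.2.2.2.2.2.1,
        h.2.2.2.2.2.2.2.2.2.1⟩ e e' φ

end UM

namespace UM

variable {A P : Type}

lemma clo_self [hA : Finite A] (φ : Form A P) (h : φ.WF) : φ ∈ clo φ h := by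
  cases φ with
  | atom p => simp [clo]
  | top => simp [clo]
  | bot => simp [clo]
  | neg φ => simp [clo]
  | and φ ψ => simp [clo]
  | box a φ => simp [clo]
  | cbox B φ => simp [clo]
  | upd E rel pre post e ψ =>
      cases ψ with
      | atom p => simp [clo]
      | top => simp [clo]
      | bot => simp [clo]
      | neg φ => simp [clo]
      | and φ ψ => simp [clo]
      | box a φ => simp [clo]
      | cbox B φ =>
          rw [clo]
          apply List.mem_append_left
          exact List.mem_map.2 ⟨e, eL_mem _ e, rfl⟩
      | upd E' rel' pre' post' e' φ => simp [clo]

end UM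
namespace UM

variable {A P : Type}

lemma clo_wf [hA : Finite A] : ∀ (n : ℕ) (φ : Form A P) (h : φ.WF), meas φ ≤ n →
    ∀ ψ ∈ clo φ h, ψ.WF := by
  intro n
  induction n using Nat.strong_induction_on with
  | _ n IH =>
    intro φ h hm ψ hmem
    have step : ∀ (φ' : Form A P) (h' : φ'.WF), meas φ' < meas φ →
        ∀ ψ' ∈ clo φ' h', ψ'.WF := fun φ' h' hlt =>
      IH (meas φ') (lt_of_lt_of_le hlt hm) φ' h' (le_refl _)
    cases φ with
    | atom p => simp [clo] at hmem; subst hmem; exact h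
    | top => simp [clo] at hmem; subst hmem; exact h
    | bot => simp [clo] at hmem; subst hmem; exact h
    | neg φ =>
        simp only [clo, List.mem_cons] at hmem
        rcases hmem with rfl | hmem
        · exact h
        · exact step φ h (by rw [meas_neg]; omega) ψ hmem
    | and φ ψ' =>
        simp only [clo, List.mem_cons, List.mem_append] at hmem
        rcases hmem with rfl | hmem | hmem
        · exact h
        · exact step φ h.1 (by rw [meas_and]; omega) ψ hmem
        · exact step ψ' h.2 (by rw [meas_and]; omega) ψ hmem
    | box a φ =>
        simp only [clo, List.mem_cons] at hmem
        rcases hmem with rfl | hmem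
        · exact h
        · exact step φ h (by rw [meas_box]; omega) ψ hmem
    | cbox B φ =>
        simp only [clo, List.mem_cons, List.mem_append, List.mem_map] at hmem
        rcases hmem with rfl | ⟨a, -, rfl⟩ | hmem
        · exact h
        · exact h
        · exact step φ h (by rw [meas_cbox]; omega) ψ hmem
    | upd E rel pre post e ψ0 =>
        have hU : (Upd.mk E rel pre post).WF := ⟨h.1, h.2.1, h.2.2.1, h.2.2.2.1, h.2.2.2.2.1⟩
        cases ψ0 with
        | atom p =>
            simp only [clo, List.mem_cons, List.mem_append] at hmem
            rcases hmem with rfl | hmem | hmem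
            · exact h
            · exact step (pre e) (hU.2.2.1 e) (meas_pre_lt (U := ⟨E,rel,pre,post⟩) hU e e _) ψ hmem
            · exact step (post e p) (hU.2.2.2.1 e p) (meas_post_lt (U := ⟨E,rel,pre,post⟩) hU e e p _) ψ hmem
        | top =>
            simp only [clo, List.mem_cons] at hmem
            rcases hmem with rfl | hmem
            · exact h
            · exact step (pre e) (hU.2.2.1 e) (meas_pre_lt (U := ⟨E,rel,pre,post⟩) hU e e _) ψ hmem
        | bot =>
            simp only [clo, List.mem_cons] at hmem
            rcases hmem with rfl | hmem
            · exact h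
            · exact step (pre e) (hU.2.2.1 e) (meas_pre_lt (U := ⟨E,rel,pre,post⟩) hU e e _) ψ hmem
        | neg φ =>
            simp only [clo, List.mem_cons, List.mem_append] at hmem
            rcases hmem with rfl | hmem | hmem
            · exact h
            · exact step (pre e) (hU.2.2.1 e) (meas_pre_lt (U := ⟨E,rel,pre,post⟩) hU e e _) ψ hmem
            · exact step (Form.updF ⟨E,rel,pre,post⟩ e φ)
                (wf_updF' (U := ⟨E,rel,pre,post⟩) hU e h.2.2.2.2.2)
                (meas_updF_lt_updF (U := ⟨E,rel,pre,post⟩) e e (φ := φ) (ψ := ∼φ)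
                  (by rw [meas_neg]; omega)) ψ hmem
        | and φ φ' =>
            simp only [clo, List.mem_cons, List.mem_append] at hmem
            rcases hmem with rfl | hmem | hmem
            · exact h
            · exact step (Form.updF ⟨E,rel,pre,post⟩ e φ)
                (wf_updF' (U := ⟨E,rel,pre,post⟩) hU e h.2.2.2.2.2.1)
                (meas_updF_lt_updF (U := ⟨E,rel,pre,post⟩) e e (φ := φ) (ψ := φ ⋏ φ')
                  (by rw [meas_and]; omega)) ψ hmem
            · exact step (Form.updF ⟨E,rel,pre,post⟩ e φ')
                (wf_updF' (U := ⟨E,rel,pre,post⟩) hU e h.2.2.2.2.2.2)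
                (meas_updF_lt_updF (U := ⟨E,rel,pre,post⟩) e e (φ := φ') (ψ := φ ⋏ φ')
                  (by rw [meas_and]; omega)) ψ hmem
        | box a φ =>
            simp only [clo, List.mem_cons, List.mem_append, List.mem_map,
              List.mem_flatMap] at hmem
            rcases hmem with rfl | hmem | ⟨f, -, rfl⟩ | ⟨f, -, hmem⟩
            · exact h
            · exact step (pre e) (hU.2.2.1 e) (meas_pre_lt (U := ⟨E,rel,pre,post⟩) hU e e _) ψ hmem
            · exact wf_box.2 (wf_updF' (U := ⟨E,rel,pre,post⟩) hU f h.2.2.2.2.2)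
            · exact step (Form.updF ⟨E,rel,pre,post⟩ f φ)
                (wf_updF' (U := ⟨E,rel,pre,post⟩) hU f h.2.2.2.2.2)
                (meas_updF_lt_updF (U := ⟨E,rel,pre,post⟩) e f (φ := φ) (ψ := Form.box a φ)
                  (by rw [meas_box]; omega)) ψ hmem
        | cbox B φ =>
            simp only [clo, List.mem_cons, List.mem_append, List.mem_map,
              List.mem_flatMap] at hmem
            rcases hmem with ⟨f, -, rfl⟩ | ⟨f, -, a, -, rfl⟩ | ⟨f, -, hmem⟩ | ⟨f, -, hmem⟩
            · exact wf_updF' (U := ⟨E,rel,pre,post⟩) hU f h.2.2.2.2.2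
            · exact wf_box.2 (wf_updF' (U := ⟨E,rel,pre,post⟩) hU f h.2.2.2.2.2)
            · exact step (pre f) (hU.2.2.1 f) (meas_pre_lt (U := ⟨E,rel,pre,post⟩) hU e f _) ψ hmem
            · exact step (Form.updF ⟨E,rel,pre,post⟩ f φ)
                (wf_updF' (U := ⟨E,rel,pre,post⟩) hU f (wf_cbox.1 h.2.2.2.2.2))
                (meas_updF_lt_updF (U := ⟨E,rel,pre,post⟩) e f (φ := φ) (ψ := Form.cbox B φ)
                  (by rw [meas_cbox]; omega)) ψ hmem
        | upd E' rel' pre' post' e' φ =>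
            have hU' : (Upd.mk E' rel' pre' post').WF :=
              ⟨h.2.2.2.2.2.1, h.2.2.2.2.2.2.1, h.2.2.2.2.2.2.2.1, h.2.2.2.2.2.2.2.2.1,
                h.2.2.2.2.2.2.2.2.2.1⟩
            simp only [clo, List.mem_cons] at hmem
            rcases hmem with rfl | hmem
            · exact h
            · exact step (Form.updF (Upd.comp ⟨E,rel,pre,post⟩ ⟨E',rel',pre',post'⟩) (e, e') φ)
                (wf_updF' (Upd.comp_wf hU hU') (e, e') h.2.2.2.2.2.2.2.2.2.2)
                (meas_comp_lt (U := ⟨E,rel,pre,post⟩) (U' := ⟨E',rel',pre',post'⟩) hU hU' e e' φ) ψ hmem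

end UM
namespace UM

variable {A P : Type}

lemma clo_closed [hA : Finite A] : ∀ (n : ℕ) (φ : Form A P) (h : φ.WF), meas φ ≤ n →
    ∀ ψ (hψm : ψ ∈ clo φ h) (hψ : ψ.WF), ∀ χ ∈ clo ψ hψ, χ ∈ clo φ h := by
  intro n
  induction n using Nat.strong_induction_on with
  | _ n IH =>
    intro φ h hm ψ hψm hψ χ hχ
    have step : ∀ (φ' : Form A P) (h' : φ'.WF), meas φ' < meas φ →
        ψ ∈ clo φ' h' → χ ∈ clo φ' h' := fun φ' h' hlt hmem =>
      IH (meas φ') (lt_of_lt_of_le hlt hm) φ' h' (le_refl _) ψ hmem hψ χ hχ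
    cases φ with
    | atom p =>
        simp [clo] at hψm; subst hψm; simpa [clo] using hχ
    | top => simp [clo] at hψm; subst hψm; simpa [clo] using hχ
    | bot => simp [clo] at hψm; subst hψm; simpa [clo] using hχ
    | neg φ =>
        simp only [clo, List.mem_cons] at hψm ⊢
        rcases hψm with rfl | hψm
        · simpa [clo] using hχ
        · exact Or.inr (step φ h (by rw [meas_neg]; omega) hψm)
    | and φ ψ' =>
        simp only [clo, List.mem_cons, List.mem_append] at hψm ⊢
        rcases hψm with rfl | hψm | hψm
        · simpa [clo] using hχ
        · exact Or.inr (Or.inl (step φ h.1 (by rw [meas_and]; omega) hψm))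
        · exact Or.inr (Or.inr (step ψ' h.2 (by rw [meas_and]; omega) hψm))
    | box a φ =>
        simp only [clo, List.mem_cons] at hψm ⊢
        rcases hψm with rfl | hψm
        · simpa [clo] using hχ
        · exact Or.inr (step φ h (by rw [meas_box]; omega) hψm)
    | cbox B φ =>
        simp only [clo, List.mem_cons, List.mem_append, List.mem_map] at hψm ⊢
        rcases hψm with rfl | ⟨a, ha, rfl⟩ | hψm
        · simpa [clo] using hχ
        · -- ψ = box a (cbox B φ); clo ψ = ψ :: clo (cbox B φ)
          simp only [clo, List.mem_cons, List.mem_append, List.mem_map] at hχ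
          rcases hχ with rfl | hχ
          · exact Or.inr (Or.inl ⟨a, ha, rfl⟩)
          · have hψ' : (Form.cbox B φ).WF := hψ
            have hχ' : χ ∈ clo (Form.cbox B φ) hψ' := hχ
            simpa only [clo, List.mem_cons, List.mem_append, List.mem_map] using hχ'
        · exact Or.inr (Or.inr (step φ h (by rw [meas_cbox]; omega) hψm))
    | upd E rel pre post e ψ0 =>
        have hU : (Upd.mk E rel pre post).WF := ⟨h.1, h.2.1, h.2.2.1, h.2.2.2.1, h.2.2.2.2.1⟩
        cases ψ0 with
        | atom p =>
            simp only [clo, List.mem_cons, List.mem_append] at hψm ⊢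
            rcases hψm with rfl | hψm | hψm
            · simpa [clo] using hχ
            · exact Or.inr (Or.inl (step (pre e) (hU.2.2.1 e)
                (meas_pre_lt (U := ⟨E,rel,pre,post⟩) hU e e _) hψm))
            · exact Or.inr (Or.inr (step (post e p) (hU.2.2.2.1 e p)
                (meas_post_lt (U := ⟨E,rel,pre,post⟩) hU e e p _) hψm))
        | top =>
            simp only [clo, List.mem_cons] at hψm ⊢
            rcases hψm with rfl | hψm
            · simpa [clo] using hχ
            · exact Or.inr (step (pre e) (hU.2.2.1 e)
                (meas_pre_lt (U := ⟨E,rel,pre,post⟩) hU e e _) hψm)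
        | bot =>
            simp only [clo, List.mem_cons] at hψm ⊢
            rcases hψm with rfl | hψm
            · simpa [clo] using hχ
            · exact Or.inr (step (pre e) (hU.2.2.1 e)
                (meas_pre_lt (U := ⟨E,rel,pre,post⟩) hU e e _) hψm)
        | neg φ =>
            simp only [clo, List.mem_cons, List.mem_append] at hψm ⊢
            rcases hψm with rfl | hψm | hψm
            · simpa [clo] using hχ
            · exact Or.inr (Or.inl (step (pre e) (hU.2.2.1 e)
                (meas_pre_lt (U := ⟨E,rel,pre,post⟩) hU e e _) hψm))
            · exact Or.inr (Or.inr (step (Form.updF ⟨E,rel,pre,post⟩ e φ)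
                (wf_updF' (U := ⟨E,rel,pre,post⟩) hU e h.2.2.2.2.2)
                (meas_updF_lt_updF (U := ⟨E,rel,pre,post⟩) e e (φ := φ) (ψ := ∼φ)
                  (by rw [meas_neg]; omega)) hψm))
        | and φ φ' =>
            simp only [clo, List.mem_cons, List.mem_append] at hψm ⊢
            rcases hψm with rfl | hψm | hψm
            · simpa [clo] using hχ
            · exact Or.inr (Or.inl (step (Form.updF ⟨E,rel,pre,post⟩ e φ)
                (wf_updF' (U := ⟨E,rel,pre,post⟩) hU e h.2.2.2.2.2.1)
                (meas_updF_lt_updF (U := ⟨E,rel,pre,post⟩) e e (φ := φ) (ψ := φ ⋏ φ')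
                  (by rw [meas_and]; omega)) hψm))
            · exact Or.inr (Or.inr (step (Form.updF ⟨E,rel,pre,post⟩ e φ')
                (wf_updF' (U := ⟨E,rel,pre,post⟩) hU e h.2.2.2.2.2.2)
                (meas_updF_lt_updF (U := ⟨E,rel,pre,post⟩) e e (φ := φ') (ψ := φ ⋏ φ')
                  (by rw [meas_and]; omega)) hψm))
        | box a φ =>
            simp only [clo, List.mem_cons, List.mem_append, List.mem_map,
              List.mem_flatMap] at hψm ⊢
            rcases hψm with rfl | hψm | ⟨f, hf, rfl⟩ | ⟨f, hf, hψm⟩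
            · simpa [clo] using hχ
            · exact Or.inr (Or.inl (step (pre e) (hU.2.2.1 e)
                (meas_pre_lt (U := ⟨E,rel,pre,post⟩) hU e e _) hψm))
            · -- ψ = box a ([U,f]φ); clo ψ = ψ :: clo ([U,f]φ)
              simp only [clo, List.mem_cons] at hχ
              rcases hχ with rfl | hχ
              · exact Or.inr (Or.inr (Or.inl ⟨f, hf, rfl⟩))
              · exact Or.inr (Or.inr (Or.inr ⟨f, hf, hχ⟩))
            · exact Or.inr (Or.inr (Or.inr ⟨f, hf,
                step (Form.updF ⟨E,rel,pre,post⟩ f φ)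
                  (wf_updF' (U := ⟨E,rel,pre,post⟩) hU f h.2.2.2.2.2)
                  (meas_updF_lt_updF (U := ⟨E,rel,pre,post⟩) e f (φ := φ)
                    (ψ := Form.box a φ) (by rw [meas_box]; omega)) hψm⟩))
        | cbox B φ =>
            simp only [clo, List.mem_cons, List.mem_append, List.mem_map,
              List.mem_flatMap] at hψm ⊢
            rcases hψm with ⟨f, hf, rfl⟩ | ⟨f, hf, a, ha, rfl⟩ | ⟨f, hf, hψm⟩ | ⟨f, hf, hψm⟩
            · -- ψ = [U,f][B*]φ ; clo ψ is the same list
              simp only [clo, List.mem_cons, List.mem_append, List.mem_map,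
                List.mem_flatMap] at hχ
              exact hχ
            · -- ψ = box a ([U,f][B*]φ)
              simp only [clo, List.mem_cons, List.mem_append, List.mem_map,
                List.mem_flatMap] at hχ
              rcases hχ with rfl | hχ
              · exact Or.inr (Or.inl ⟨f, hf, a, ha, rfl⟩)
              · have hψ' : (Form.upd E rel pre post f (Form.cbox B φ)).WF := hψ
                have hχ' : χ ∈ clo (Form.upd E rel pre post f (Form.cbox B φ)) hψ' := hχ
                simpa only [clo, List.mem_cons, List.mem_append, List.mem_map, List.mem_flatMap] using hχ'
            · exact Or.inr (Or.inr (Or.inl ⟨f, hf, step (pre f) (hU.2.2.1 f)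
                (meas_pre_lt (U := ⟨E,rel,pre,post⟩) hU e f _) hψm⟩))
            · exact Or.inr (Or.inr (Or.inr ⟨f, hf,
                step (Form.updF ⟨E,rel,pre,post⟩ f φ)
                  (wf_updF' (U := ⟨E,rel,pre,post⟩) hU f (wf_cbox.1 h.2.2.2.2.2))
                  (meas_updF_lt_updF (U := ⟨E,rel,pre,post⟩) e f (φ := φ)
                    (ψ := Form.cbox B φ) (by rw [meas_cbox]; omega)) hψm⟩))
        | upd E' rel' pre' post' e' φ =>
            have hU' : (Upd.mk E' rel' pre' post').WF :=
              ⟨h.2.2.2.2.2.1, h.2.2.2.2.2.2.1, h.2.2.2.2.2.2.2.1, h.2.2.2.2.2.2.2.2.1,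
                h.2.2.2.2.2.2.2.2.2.1⟩
            simp only [clo, List.mem_cons] at hψm ⊢
            rcases hψm with rfl | hψm
            · simpa [clo] using hχ
            · exact Or.inr (step
                (Form.updF (Upd.comp ⟨E,rel,pre,post⟩ ⟨E',rel',pre',post'⟩) (e, e') φ)
                (wf_updF' (Upd.comp_wf hU hU') (e, e') h.2.2.2.2.2.2.2.2.2.2)
                (meas_comp_lt (U := ⟨E,rel,pre,post⟩) (U' := ⟨E',rel',pre',post'⟩)
                  hU hU' e e' φ) hψm)

end UM

namespace UM

variable {A P : Type}

open PF

/-! ### Descriptions over a finite closed list of formulas -/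

def lit (L : List (Form A P)) (v : Fin L.length → Bool) (i : Fin L.length) : Form A P :=
  if v i then L.get i else ∼(L.get i)

def desc (L : List (Form A P)) (v : Fin L.length → Bool) : Form A P :=
  bigAnd ((List.finRange L.length).map (lit L v))

def Con (ψ : Form A P) : Prop := ¬ Deriv (ψ ⟶ ⊥')

def memv (L : List (Form A P)) (v : Fin L.length → Bool) (ψ : Form A P) : Prop :=
  ∃ i, L.get i = ψ ∧ v i = true

lemma wf_lit {L : List (Form A P)} (hwf : ∀ ψ ∈ L, ψ.WF) (v : Fin L.length → Bool)
    (i : Fin L.length) : (lit L v i).WF := by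
  have hmem : L.get i ∈ L := by
    have := L.get_mem i
    simpa using this
  unfold lit
  split
  · exact hwf _ hmem
  · exact wf_neg.2 (hwf _ hmem)

lemma wf_desc {L : List (Form A P)} (hwf : ∀ ψ ∈ L, ψ.WF) (v : Fin L.length → Bool) :
    (desc L v).WF := by
  refine wf_bigAnd.2 ?_
  intro χ hχ
  obtain ⟨i, -, rfl⟩ := List.mem_map.1 hχ
  exact wf_lit hwf v i

lemma dDescLit {L : List (Form A P)} (hwf : ∀ ψ ∈ L, ψ.WF) (v : Fin L.length → Bool)
    (i : Fin L.length) : Deriv (desc L v ⟶ lit L v i) := by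
  refine dBigAndElim ?_ (List.mem_map.2 ⟨i, List.mem_finRange i, rfl⟩)
  intro χ hχ
  obtain ⟨j, -, rfl⟩ := List.mem_map.1 hχ
  exact wf_lit hwf v j

lemma dDescOfMem {L : List (Form A P)} (hwf : ∀ ψ ∈ L, ψ.WF) {v : Fin L.length → Bool}
    {ψ : Form A P} (h : memv L v ψ) : Deriv (desc L v ⟶ ψ) := by
  obtain ⟨i, hi, hv⟩ := h
  have := dDescLit hwf v i
  rw [lit, if_pos hv, hi] at this
  exact this

lemma dDescOfNotMem {L : List (Form A P)} (hwf : ∀ ψ ∈ L, ψ.WF)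
    {v : Fin L.length → Bool} {ψ : Form A P} (hL : ψ ∈ L) (h : ¬ memv L v ψ) :
    Deriv (desc L v ⟶ ∼ψ) := by
  obtain ⟨i, hi⟩ := List.mem_iff_get.1 hL
  have hv : v i = false := by
    by_contra hc
    exact h ⟨i, hi, by simpa using hc⟩
  have := dDescLit hwf v i
  rw [lit, if_neg (by simp [hv]), hi] at this
  exact this

/-- maximality -/
lemma memv_of_deriv {L : List (Form A P)} (hwf : ∀ ψ ∈ L, ψ.WF)
    {v : Fin L.length → Bool} (hcon : Con (desc L v)) {ψ : Form A P} (hL : ψ ∈ L)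
    (h : Deriv (desc L v ⟶ ψ)) : memv L v ψ := by
  by_contra hc
  have h2 := dDescOfNotMem hwf hL hc
  have contr : Deriv ((ψ ⋏ ∼ψ) ⟶ ⊥') :=
    dUncurry (dTaut1 (imp X0 (imp (.neg X0) .bot)) (by decide) (hwf ψ hL))
  exact hcon (dImpTrans (dImpAnd h h2) contr)

/-! ### All Boolean vectors -/

def allVecs : (k : ℕ) → List (Fin k → Bool)
  | 0 => [fun i => absurd i.2 (Nat.not_lt_zero _)]
  | k+1 => (allVecs k).flatMap fun v => [Fin.cons true v, Fin.cons false v]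

lemma allVecs_mem : ∀ (k : ℕ) (v : Fin k → Bool), v ∈ allVecs k := by
  intro k
  induction k with
  | zero =>
      intro v
      have : v = fun i => absurd i.2 (Nat.not_lt_zero _) := by
        funext i; exact absurd i.2 (Nat.not_lt_zero _)
      rw [this]; exact List.mem_singleton.2 rfl
  | succ k ih =>
      intro v
      have hv : v = Fin.cons (v 0) (Fin.tail v) := (Fin.cons_self_tail v).symm
      refine List.mem_flatMap.2 ⟨Fin.tail v, ih _, ?_⟩
      cases hb : v 0
      · rw [hv, hb]; simp
      · rw [hv, hb]; simp

/-! ### desc decomposition for cons lists -/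

lemma desc_cons {ψ : Form A P} {L : List (Form A P)} (b : Bool)
    (v : Fin L.length → Bool) :
    desc (ψ :: L) (Fin.cons b v) = (if b then ψ else ∼ψ) ⋏ desc L v := by
  unfold desc
  simp only [List.length_cons, List.finRange_succ, List.map_cons, List.map_map]
  have h1 : lit (ψ :: L) (Fin.cons b v) (0 : Fin (L.length + 1)) =
      if b then ψ else ∼ψ := by
    unfold lit
    cases b <;> simp [Fin.cons_zero] <;> rfl
  have h2 : (lit (ψ :: L) (Fin.cons b v)) ∘ Fin.succ = lit L v := by
    funext i
    show lit (ψ :: L) (Fin.cons b v) i.succ = lit L v i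
    unfold lit
    rw [Fin.cons_succ]
    have hg : (ψ :: L).get i.succ = L.get i := rfl
    rw [hg]
  rw [h1, h2]
  rfl

/-- excluded middle over all descriptions -/
lemma dEM : ∀ (L : List (Form A P)), (∀ ψ ∈ L, ψ.WF) →
    Deriv (bigOr ((allVecs L.length).map (desc L))) := by
  intro L
  induction L with
  | nil =>
      intro _
      refine Deriv.mp (dBigOrIntro ?_ ?_) dTop
      · intro χ hχ
        rw [List.mem_singleton.1 hχ]
        exact wf_desc (by simp) _
      · exact List.mem_singleton.2 rfl
  | cons ψ L ih =>
      intro hwf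
      have hψ : ψ.WF := hwf ψ (List.mem_cons_self)
      have hwf' : ∀ χ ∈ L, χ.WF := fun χ hχ => hwf χ (List.mem_cons_of_mem _ hχ)
      have IH := ih hwf'
      have hwfall : ∀ χ ∈ (allVecs (ψ :: L).length).map (desc (ψ :: L)), χ.WF := by
        intro χ hχ
        obtain ⟨w, -, rfl⟩ := List.mem_map.1 hχ
        exact wf_desc hwf w
      refine Deriv.mp (dBigOrElim ?_ (wf_bigOr.2 hwfall) ?_) IH
      · intro χ hχ
        obtain ⟨v, hv, rfl⟩ := List.mem_map.1 hχ
        -- desc L v  ⟶  bigOr target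
        have key : Deriv (desc L v ⟶
            (desc (ψ :: L) (Fin.cons true v) ⋎ desc (ψ :: L) (Fin.cons false v))) := by
          rw [desc_cons, desc_cons]
          simp only [if_pos, if_neg]
          exact dTaut2 (imp X1 (PF.or (.and X0 X1) (.and (.neg X0) X1))) (by decide)
            hψ (wf_desc hwf' v)
        have m1 : desc (ψ :: L) (Fin.cons true v) ∈
            (allVecs (ψ :: L).length).map (desc (ψ :: L)) := by
          refine List.mem_map.2 ⟨_, ?_, rfl⟩
          exact allVecs_mem _ _
        have m2 : desc (ψ :: L) (Fin.cons false v) ∈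
            (allVecs (ψ :: L).length).map (desc (ψ :: L)) := by
          refine List.mem_map.2 ⟨_, ?_, rfl⟩
          exact allVecs_mem _ _
        exact dImpTrans key (dOrElim (dBigOrIntro hwfall m1) (dBigOrIntro hwfall m2))
      · intro χ hχ
        obtain ⟨w, -, rfl⟩ := List.mem_map.1 hχ
        exact wf_desc hwf' w

end UM

namespace UM

variable {A P : Type}

open PF

/-! ### The canonical model over a closed list -/

lemma dAndImpsOrElim {ξ : Form A P} (hξ : ξ.WF) :
    ∀ (l : List (Form A P)), (∀ χ ∈ l, χ.WF) →
      Deriv (bigAnd (l.map (· ⟶ ξ)) ⟶ (bigOr l ⟶ ξ)) := by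
  intro l
  induction l with
  | nil =>
      intro _
      exact dWeaken trivial (dEFQ hξ)
  | cons χ l ih =>
      intro hwf
      have hχ : χ.WF := hwf χ (List.mem_cons_self)
      have hwf' : ∀ x ∈ l, Form.WF x := fun x hx => hwf x (List.mem_cons_of_mem _ hx)
      have IH := ih hwf'
      have hA : (bigAnd (l.map (· ⟶ ξ))).WF := by
        refine wf_bigAnd.2 ?_
        intro x hx
        obtain ⟨y, hy, rfl⟩ := List.mem_map.1 hx
        exact wf_imp.2 ⟨hwf' y hy, hξ⟩
      have hO : (bigOr l).WF := wf_bigOr.2 hwf'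
      -- goal : ((χ ⟶ ξ) ⋏ bigAnd _) ⟶ ((χ ⋎ bigOr l) ⟶ ξ)
      have t : Deriv ((bigAnd (l.map (· ⟶ ξ)) ⟶ (bigOr l ⟶ ξ)) ⟶
          (((χ ⟶ ξ) ⋏ bigAnd (l.map (· ⟶ ξ))) ⟶ ((χ ⋎ bigOr l) ⟶ ξ))) :=
        dTaut4 (imp (imp X0 (imp X1 X2)) (imp (.and (imp X3 X2) X0)
          (imp (PF.or X3 X1) X2))) (by decide) hA hO hξ hχ
      exact Deriv.mp t IH

def CanS (L : List (Form A P)) : Type := {v : Fin L.length → Bool // Con (desc L v)}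

def CanM (L : List (Form A P)) : Model A P where
  S := CanS L
  R a x y := ∀ ψ : Form A P, memv L x.1 (Form.box a ψ) → memv L y.1 ψ
  V p x := memv L x.1 (Form.atom p)

/-- The canonical box lemma. -/
lemma canonicalBox {L : List (Form A P)} (hwf : ∀ ψ ∈ L, ψ.WF)
    (hclbox : ∀ (a : A) (ψ : Form A P), Form.box a ψ ∈ L → ψ ∈ L)
    (x : CanS L) (a : A) {ξ : Form A P} (hξ : ξ.WF)
    (hsucc : ∀ y : CanS L, (CanM L).R a x y → Deriv (desc L y.1 ⟶ ξ)) :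
    Deriv (desc L x.1 ⟶ Form.box a ξ) := by
  classical
  have hdx : (desc L x.1).WF := wf_desc hwf x.1
  -- for every vector v : ⊢ desc x ⟶ [a](desc v ⟶ ξ)
  have key : ∀ v : Fin L.length → Bool,
      Deriv (desc L x.1 ⟶ Form.box a (desc L v ⟶ ξ)) := by
    intro v
    have hdv : (desc L v).WF := wf_desc hwf v
    by_cases hcon : Con (desc L v)
    · by_cases hR : (CanM L).R a x ⟨v, hcon⟩
      · -- good state
        have := hsucc ⟨v, hcon⟩ hR
        exact dWeaken hdx (Deriv.necBox a this)
      · -- not a successor : some box formula witnesses it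
        have hR' : ∃ ψ, memv L x.1 (Form.box a ψ) ∧ ¬ memv L v ψ := by
          by_contra hc
          push_neg at hc
          exact hR fun ψ hm => hc ψ hm
        obtain ⟨ψ, hmem, hnmem⟩ := hR'
        have hboxL : Form.box a ψ ∈ L := by
          obtain ⟨i, hi, -⟩ := hmem
          rw [← hi]
          have := L.get_mem i
          simpa using this
        have hψL : ψ ∈ L := hclbox a ψ hboxL
        have l1 : Deriv (desc L v ⟶ ∼ψ) := dDescOfNotMem hwf hψL hnmem
        have l2 : Deriv (ψ ⟶ ∼(desc L v)) := dImpNegSwap l1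
        have l3 : Deriv (Form.box a ψ ⟶ Form.box a (∼(desc L v))) := dBoxMono l2
        have l4 : Deriv (desc L x.1 ⟶ Form.box a ψ) := dDescOfMem hwf hmem
        have l5 : Deriv (∼(desc L v) ⟶ (desc L v ⟶ ξ)) :=
          dTaut2 (imp (.neg X0) (imp X0 X1)) (by decide) hdv hξ
        exact dImpTrans (dImpTrans l4 l3) (dBoxMono l5)
    · -- inconsistent
      have hbot : Deriv (∼(desc L v)) := dNotOfImpBot (not_not.1 (fun hc => hcon hc))
      have : Deriv (desc L v ⟶ ξ) := dImpOfNeg hbot hξ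
      exact dWeaken hdx (Deriv.necBox a this)
  -- collect
  have hcollect : Deriv (desc L x.1 ⟶
      Form.box a (bigAnd (((allVecs L.length).map (desc L)).map (· ⟶ ξ)))) := by
    refine dBoxBigAnd hdx ?_
    intro χ hχ
    obtain ⟨χ', hχ', rfl⟩ := List.mem_map.1 hχ
    obtain ⟨v, hv, rfl⟩ := List.mem_map.1 hχ'
    exact key v
  have hwfall : ∀ χ ∈ (allVecs L.length).map (desc L), χ.WF := by
    intro χ hχ
    obtain ⟨w, -, rfl⟩ := List.mem_map.1 hχ
    exact wf_desc hwf w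
  have helim := dAndImpsOrElim hξ ((allVecs L.length).map (desc L)) hwfall
  have hEM := dEM L hwf
  -- ⊢ [a] (bigOr descs)
  have hboxEM : Deriv (Form.box a (bigOr ((allVecs L.length).map (desc L)))) :=
    Deriv.necBox a hEM
  -- ⊢ desc x ⟶ [a](bigOr ⟶ ξ)
  have h1 : Deriv (desc L x.1 ⟶
      Form.box a (bigOr ((allVecs L.length).map (desc L)) ⟶ ξ)) :=
    dImpTrans hcollect (dBoxMono helim)
  -- combine with distBox
  have h2 : Deriv (Form.box a (bigOr ((allVecs L.length).map (desc L)) ⟶ ξ) ⟶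
      (Form.box a (bigOr ((allVecs L.length).map (desc L))) ⟶ Form.box a ξ)) :=
    Deriv.distBox a _ _ (wf_bigOr.2 hwfall) hξ
  exact dMPU (dImpTrans h1 h2) (dWeaken hdx hboxEM)

end UM

namespace UM

variable {A P : Type}

open PF

/-! ### Classical enumerations of predicates on finite types -/

open Classical in
noncomputable def listP {E : Type} (hE : Finite E) (Q : E → Prop) : List E :=
  (eL E hE).filter (fun x => decide (Q x))

lemma listP_iff {E : Type} (hE : Finite E) (Q : E → Prop) (x : E) :
    x ∈ listP hE Q ↔ Q x := by
  classical
  constructor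
  · intro h
    have := List.of_mem_filter h
    simpa using this
  · intro h
    exact List.mem_filter.2 ⟨eL_mem hE x, by simpa using h⟩

lemma deriv_desc_iff_memv {L : List (Form A P)} (hwf : ∀ ψ ∈ L, ψ.WF) {x : CanS L}
    {ψ : Form A P} (hL : ψ ∈ L) : Deriv (desc L x.1 ⟶ ψ) ↔ memv L x.1 ψ :=
  ⟨memv_of_deriv hwf x.2 hL, dDescOfMem hwf⟩

lemma memv_not_iff {L : List (Form A P)} (hwf : ∀ ψ ∈ L, ψ.WF) {x : CanS L}
    {φ : Form A P} (hφL : φ ∈ L) (hnφL : ∼φ ∈ L) :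
    memv L x.1 (∼φ) ↔ ¬ memv L x.1 φ := by
  constructor
  · intro h hc
    exact x.2 (dImpTrans (dImpAnd (dDescOfMem hwf hc) (dDescOfMem hwf h))
      (dUncurry (dTaut1 (imp X0 (imp (.neg X0) .bot)) (by decide) (hwf φ hφL))))
  · intro h
    exact memv_of_deriv hwf x.2 hnφL (dDescOfNotMem hwf hφL h)

/-! ### The common-knowledge case of the truth lemma -/

lemma truth_cbox [hA : Finite A] {L : List (Form A P)} (hwf : ∀ ψ ∈ L, ψ.WF)
    (hcl : ∀ ψ ∈ L, ∀ (hψ : ψ.WF), ∀ χ ∈ clo ψ hψ, χ ∈ L)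
    (B : Set A) (φ : Form A P) (hL : Form.cbox B φ ∈ L)
    (IH : ∀ χ, meas χ < meas (Form.cbox B φ) → χ ∈ L → ∀ x : CanS L,
      (sat χ (CanM L) x ↔ memv L x.1 χ)) :
    ∀ x : CanS L, sat (Form.cbox B φ) (CanM L) x ↔ memv L x.1 (Form.cbox B φ) := by
  classical
  have hψwf : (Form.cbox B φ).WF := hwf _ hL
  have hφwf : φ.WF := hψwf
  have hφL : φ ∈ L := hcl _ hL hψwf φ (by rw [clo]; simp [clo_self]; exact Or.inr (Or.inr (clo_self φ hψwf)))
  have hboxL : ∀ a : A, Form.box a (Form.cbox B φ) ∈ L := by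
    intro a
    refine hcl _ hL hψwf _ ?_
    rw [clo]
    simp only [List.mem_cons, List.mem_append, List.mem_map]
    exact Or.inr (Or.inl ⟨a, eL_mem hA a, rfl⟩)
  have hmeasφ : meas φ < meas (Form.cbox B φ) := by rw [meas_cbox]; omega
  set lB : List A := listP hA (fun a => a ∈ B) with hlBdef
  have hlB : ∀ a, a ∈ lB ↔ a ∈ B := fun a => listP_iff hA _ a
  have hmix := Deriv.mix B lB hlB φ hφwf
  -- ⊢ [B*]φ ⟶ φ
  have hmix1 : Deriv (Form.cbox B φ ⟶ φ) :=
    dImpTrans hmix (dAndElimL hφwf (by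
      refine wf_bigAnd.2 ?_
      intro χ hχ
      obtain ⟨a, -, rfl⟩ := List.mem_map.1 hχ
      exact wf_box.2 (wf_cbox.2 hφwf)))
  -- ⊢ [B*]φ ⟶ [a][B*]φ  for a ∈ B
  have hmix2 : ∀ a ∈ B, Deriv (Form.cbox B φ ⟶ Form.box a (Form.cbox B φ)) := by
    intro a haB
    have hwfbig : ∀ χ ∈ lB.map (fun a => Form.box a (Form.cbox B φ)), χ.WF := by
      intro χ hχ
      obtain ⟨b, -, rfl⟩ := List.mem_map.1 hχ
      exact wf_box.2 (wf_cbox.2 hφwf)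
    refine dImpTrans (dImpTrans hmix (dAndElimR hφwf (wf_bigAnd.2 hwfbig))) ?_
    exact dBigAndElim hwfbig (List.mem_map.2 ⟨a, (hlB a).2 haB, rfl⟩)
  intro x
  constructor
  · -- truth implies membership, via the induction axiom
    intro hsat
    -- the states satisfying [B*]φ
    set GS : (Fin L.length → Bool) → Prop :=
      fun v => ∃ hcon : Con (desc L v), sat (Form.cbox B φ) (CanM L) ⟨v, hcon⟩ with hGS
    set goodL : List (Form A P) := (listP (by infer_instance) GS).map (desc L) with hgoodL
    set χ' : Form A P := bigOr goodL with hχ'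
    have hwfgood : ∀ χ ∈ goodL, χ.WF := by
      intro χ hχ
      obtain ⟨v, -, rfl⟩ := List.mem_map.1 hχ
      exact wf_desc hwf v
    have hχ'wf : χ'.WF := wf_bigOr.2 hwfgood
    -- (a) χ' ⟶ φ
    have ha : Deriv (χ' ⟶ φ) := by
      refine dBigOrElim ?_ hφwf hwfgood
      intro ψ hψ
      obtain ⟨v, hv, rfl⟩ := List.mem_map.1 hψ
      obtain ⟨hcon, hsatv⟩ := (listP_iff _ _ v).1 hv
      have : sat φ (CanM L) ⟨v, hcon⟩ := hsatv _ Relation.ReflTransGen.refl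
      exact dDescOfMem hwf ((IH φ hmeasφ hφL ⟨v, hcon⟩).1 this)
    -- (b) χ' ⟶ [a]χ' for a ∈ B
    have hb : ∀ a ∈ B, Deriv (χ' ⟶ Form.box a χ') := by
      intro a haB
      refine dBigOrElim ?_ (wf_box.2 hχ'wf) hwfgood
      intro ψ hψ
      obtain ⟨v, hv, rfl⟩ := List.mem_map.1 hψ
      obtain ⟨hcon, hsatv⟩ := (listP_iff _ _ v).1 hv
      refine canonicalBox hwf (fun b ξ hbL => hcl _ hbL (hwf _ hbL) ξ
        (by rw [clo]; exact List.mem_cons_of_mem _ (clo_self ξ (wf_box.1 (hwf _ hbL)))))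
        ⟨v, hcon⟩ a hχ'wf ?_
      intro y hRy
      have hsaty : sat (Form.cbox B φ) (CanM L) y := by
        erw [sat_cbox]
        intro t ht
        exact hsatv t (Relation.ReflTransGen.head ⟨a, haB, hRy⟩ ht)
      have : GS y.1 := ⟨y.2, by
        have : (⟨y.1, y.2⟩ : CanS L) = y := rfl
        rw [this]; exact hsaty⟩
      exact dBigOrIntro hwfgood (List.mem_map.2 ⟨y.1, (listP_iff _ _ y.1).2 this, rfl⟩)
    -- χ' ⟶ [B]χ'
    have hstep : Deriv (χ' ⟶ bigAnd (lB.map fun a => Form.box a χ')) := by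
      refine dBigAndIntro ?_ hχ'wf
      intro ξ hξ
      obtain ⟨a, ha', rfl⟩ := List.mem_map.1 hξ
      exact hb a ((hlB a).1 ha')
    -- the induction axiom
    have hinduc := Deriv.induc B lB hlB χ' hχ'wf
    have hχcbox : Deriv (χ' ⟶ Form.cbox B χ') :=
      Deriv.mp hinduc (Deriv.necCbox B hstep)
    have hfinal : Deriv (χ' ⟶ Form.cbox B φ) :=
      dImpTrans hχcbox (dCboxMono ha)
    have hxmem : GS x.1 := ⟨x.2, by
      have : (⟨x.1, x.2⟩ : CanS L) = x := rfl
      rw [this]; exact hsat⟩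
    have hxχ : Deriv (desc L x.1 ⟶ χ') :=
      dBigOrIntro hwfgood (List.mem_map.2 ⟨x.1, (listP_iff _ _ x.1).2 hxmem, rfl⟩)
    exact memv_of_deriv hwf x.2 hL (dImpTrans hxχ hfinal)
  · -- membership implies truth
    intro hmem
    erw [sat_cbox]
    intro t ht
    -- first : the invariant
    have hinv : ∀ (y : (CanM L).S), Relation.ReflTransGen
        (fun x y => ∃ a ∈ B, (CanM L).R a x y) x y → memv L y.1 (Form.cbox B φ) := by
      intro y hy
      induction hy with
      | refl => exact hmem
      | @tail b c hab hbc ih =>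
          obtain ⟨a, haB, hR⟩ := hbc
          have h1 : Deriv (desc L b.1 ⟶ Form.box a (Form.cbox B φ)) :=
            dImpTrans (dDescOfMem hwf ih) (hmix2 a haB)
          have h2 := memv_of_deriv hwf b.2 (hboxL a) h1
          exact hR _ h2
    have hyφ : memv L t.1 φ :=
      memv_of_deriv hwf t.2 hφL (dImpTrans (dDescOfMem hwf (hinv t ht)) hmix1)
    exact (IH φ hmeasφ hφL t).2 hyφ

end UM

namespace UM

variable {A P : Type}

open PF

lemma closed_box [hA : Finite A] {L : List (Form A P)} (hwf : ∀ ψ ∈ L, ψ.WF)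
    (hcl : ∀ ψ ∈ L, ∀ (hψ : ψ.WF), ∀ χ ∈ clo ψ hψ, χ ∈ L) :
    ∀ (a : A) (ψ : Form A P), Form.box a ψ ∈ L → ψ ∈ L := fun a ψ hbL =>
  hcl _ hbL (hwf _ hbL) ψ
    (by rw [clo]; exact List.mem_cons_of_mem _ (clo_self ψ (wf_box.1 (hwf _ hbL))))

/-! ### The update-box case of the truth lemma -/

lemma truth_updbox [hA : Finite A] {L : List (Form A P)} (hwf : ∀ ψ ∈ L, ψ.WF)
    (hcl : ∀ ψ ∈ L, ∀ (hψ : ψ.WF), ∀ χ ∈ clo ψ hψ, χ ∈ L)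
    (U : Upd A P) (hU : U.WF) (e : U.E) (a : A) (φ : Form A P)
    (hL : Form.updF U e (Form.box a φ) ∈ L)
    (IH : ∀ χ, meas χ < meas (Form.updF U e (Form.box a φ)) → χ ∈ L → ∀ x : CanS L,
      (sat χ (CanM L) x ↔ memv L x.1 χ)) :
    ∀ x : CanS L, sat (Form.updF U e (Form.box a φ)) (CanM L) x ↔
      memv L x.1 (Form.updF U e (Form.box a φ)) := by
  classical
  have hψwf : (Form.updF U e (Form.box a φ)).WF := hwf _ hL
  have hφwf : φ.WF := hψwf.2.2.2.2.2
  have hpreL : U.pre e ∈ L := by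
    refine hcl _ hL hψwf _ ?_
    simp only [Form.updF]
    rw [clo]
    exact List.mem_cons_of_mem _ (List.mem_append_left _ (clo_self _ _))
  have hUFfL : ∀ f, Form.updF U f φ ∈ L := by
    intro f
    refine hcl _ hL hψwf _ ?_
    simp only [Form.updF]
    rw [clo]
    refine List.mem_cons_of_mem _ (List.mem_append_right _ (List.mem_append_right _ ?_))
    exact List.mem_flatMap.2 ⟨f, eL_mem _ f, clo_self _ _⟩
  have hboxUF : ∀ f, Form.box a (Form.updF U f φ) ∈ L := by
    intro f
    refine hcl _ hL hψwf _ ?_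
    simp only [Form.updF]
    rw [clo]
    refine List.mem_cons_of_mem _ (List.mem_append_right _ (List.mem_append_left _ ?_))
    exact List.mem_map.2 ⟨f, eL_mem _ f, rfl⟩
  have hm_pre : meas (U.pre e) < meas (Form.updF U e (Form.box a φ)) :=
    meas_pre_lt hU e e _
  have hm_uf : ∀ f, meas (Form.updF U f φ) < meas (Form.updF U e (Form.box a φ)) :=
    fun f => meas_updF_lt_updF e f (by rw [meas_box]; omega)
  set lf : List U.E := listP hU.2.1 (U.rel a e) with hlfdef
  have hlf : ∀ f, f ∈ lf ↔ U.rel a e f := fun f => listP_iff _ _ f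
  have hax := Deriv.updBox U e hU a φ hφwf lf hlf
  have hwfAndl : ∀ χ ∈ lf.map (fun f => Form.box a (Form.updF U f φ)), χ.WF := by
    intro χ hχ
    obtain ⟨f, -, rfl⟩ := List.mem_map.1 hχ
    exact wf_box.2 (wf_updF' hU f hφwf)
  intro x
  constructor
  · intro hsat
    by_cases hpre : memv L x.1 (U.pre e)
    · have hsatpre : sat (U.pre e) (CanM L) x := (IH _ hm_pre hpreL x).2 hpre
      have hbig : Deriv (desc L x.1 ⟶ bigAnd (lf.map fun f => Form.box a
          (Form.updF U f φ))) := by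
        refine dBigAndIntro ?_ (wf_desc hwf x.1)
        intro χ hχ
        obtain ⟨f, hf, rfl⟩ := List.mem_map.1 hχ
        refine canonicalBox hwf (closed_box hwf hcl) x a (wf_updF' hU f hφwf) ?_
        intro y hRy
        have hsaty : sat (Form.updF U f φ) (CanM L) y :=
          semUpdBox.1 hsat hsatpre f ((hlf f).1 hf) y hRy
        exact dDescOfMem hwf ((IH _ (hm_uf f) (hUFfL f) y).1 hsaty)
      have h2 : Deriv (desc L x.1 ⟶ (U.pre e ⟶ bigAnd (lf.map fun f => Form.box a
          (Form.updF U f φ)))) :=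
        dImpTrans hbig (dTaut2 (imp X0 (imp X1 X0)) (by decide)
          (wf_bigAnd.2 hwfAndl) (wf_pre hU e))
      exact memv_of_deriv hwf x.2 hL (dImpTrans h2 (dBiImpR hax))
    · have h1 : Deriv (desc L x.1 ⟶ ∼(U.pre e)) := dDescOfNotMem hwf hpreL hpre
      exact memv_of_deriv hwf x.2 hL (dImpTrans h1 (dNegPre hU e (wf_box.2 hφwf)))
  · intro hmem
    refine semUpdBox.2 ?_
    intro hsatpre f hrel y hRy
    have hpre : memv L x.1 (U.pre e) := (IH _ hm_pre hpreL x).1 hsatpre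
    have h1 : Deriv (desc L x.1 ⟶ bigAnd (lf.map fun f => Form.box a
        (Form.updF U f φ))) :=
      dMPU (dImpTrans (dDescOfMem hwf hmem) (dBiImpL hax)) (dDescOfMem hwf hpre)
    have h2 : Deriv (desc L x.1 ⟶ Form.box a (Form.updF U f φ)) :=
      dImpTrans h1 (dBigAndElim hwfAndl (List.mem_map.2 ⟨f, (hlf f).2 hrel, rfl⟩))
    have h3 : memv L x.1 (Form.box a (Form.updF U f φ)) :=
      memv_of_deriv hwf x.2 (hboxUF f) h2
    have h4 : memv L y.1 (Form.updF U f φ) := hRy _ h3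
    exact (IH _ (hm_uf f) (hUFfL f) y).2 h4

end UM

namespace UM

variable {A P : Type}

open PF

/-! ### The update-common-knowledge case of the truth lemma -/

lemma truth_updcbox [hA : Finite A] {L : List (Form A P)} (hwf : ∀ ψ ∈ L, ψ.WF)
    (hcl : ∀ ψ ∈ L, ∀ (hψ : ψ.WF), ∀ χ ∈ clo ψ hψ, χ ∈ L)
    (U : Upd A P) (hU : U.WF) (e : U.E) (B : Set A) (φ : Form A P)
    (hL : Form.updF U e (Form.cbox B φ) ∈ L)
    (IH : ∀ χ, meas χ < meas (Form.updF U e (Form.cbox B φ)) → χ ∈ L → ∀ x : CanS L,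
      (sat χ (CanM L) x ↔ memv L x.1 χ)) :
    ∀ x : CanS L, sat (Form.updF U e (Form.cbox B φ)) (CanM L) x ↔
      memv L x.1 (Form.updF U e (Form.cbox B φ)) := by
  classical
  have hψwf : (Form.updF U e (Form.cbox B φ)).WF := hwf _ hL
  have hφwf : φ.WF := hψwf.2.2.2.2.2
  have hcbwf : (Form.cbox B φ).WF := hφwf
  -- memberships
  have hUFcb : ∀ f, Form.updF U f (Form.cbox B φ) ∈ L := by
    intro f
    refine hcl _ hL hψwf _ ?_
    simp only [Form.updF]
    rw [clo]
    exact List.mem_append_left _ (List.mem_map.2 ⟨f, eL_mem _ f, rfl⟩)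
  have hboxUFcb : ∀ (a : A) (f : U.E), Form.box a (Form.updF U f (Form.cbox B φ)) ∈ L := by
    intro a f
    refine hcl _ hL hψwf _ ?_
    simp only [Form.updF]
    rw [clo]
    refine List.mem_append_right _ (List.mem_append_left _ ?_)
    exact List.mem_flatMap.2 ⟨f, eL_mem _ f, List.mem_map.2 ⟨a, eL_mem _ a, rfl⟩⟩
  have hpreL : ∀ f, U.pre f ∈ L := by
    intro f
    refine hcl _ hL hψwf _ ?_
    simp only [Form.updF]
    rw [clo]
    refine List.mem_append_right _ (List.mem_append_right _ (List.mem_append_left _ ?_))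
    exact List.mem_flatMap.2 ⟨f, eL_mem _ f, clo_self _ _⟩
  have hUFφL : ∀ f, Form.updF U f φ ∈ L := by
    intro f
    refine hcl _ hL hψwf _ ?_
    simp only [Form.updF]
    rw [clo]
    refine List.mem_append_right _ (List.mem_append_right _ (List.mem_append_right _ ?_))
    exact List.mem_flatMap.2 ⟨f, eL_mem _ f, clo_self _ _⟩
  -- measures
  have hm_pre : ∀ f, meas (U.pre f) < meas (Form.updF U e (Form.cbox B φ)) :=
    fun f => meas_pre_lt hU e f _
  have hm_uf : ∀ f, meas (Form.updF U f φ) < meas (Form.updF U e (Form.cbox B φ)) :=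
    fun f => meas_updF_lt_updF e f (by rw [meas_cbox]; omega)
  -- the mix facts
  set lB : List A := listP hA (fun a => a ∈ B) with hlBdef
  have hlB : ∀ a, a ∈ lB ↔ a ∈ B := fun a => listP_iff hA _ a
  have hmix := Deriv.mix B lB hlB φ hφwf
  have hwfmixand : ∀ χ ∈ lB.map (fun a => Form.box a (Form.cbox B φ)), χ.WF := by
    intro χ hχ
    obtain ⟨b, -, rfl⟩ := List.mem_map.1 hχ
    exact wf_box.2 hcbwf
  have hmix1 : Deriv (Form.cbox B φ ⟶ φ) :=
    dImpTrans hmix (dAndElimL hφwf (wf_bigAnd.2 hwfmixand))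
  have hmix2 : ∀ a ∈ B, Deriv (Form.cbox B φ ⟶ Form.box a (Form.cbox B φ)) := by
    intro a haB
    refine dImpTrans (dImpTrans hmix (dAndElimR hφwf (wf_bigAnd.2 hwfmixand))) ?_
    exact dBigAndElim hwfmixand (List.mem_map.2 ⟨a, (hlB a).2 haB, rfl⟩)
  -- F1
  have F1 : ∀ f, Deriv (Form.updF U f (Form.cbox B φ) ⟶ Form.updF U f φ) :=
    fun f => dUpdMono hU hmix1
  -- F2
  have F2 : ∀ (f : U.E) (a : A), a ∈ B → ∀ g, U.rel a f g →
      Deriv ((Form.updF U f (Form.cbox B φ) ⋏ U.pre f) ⟶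
        Form.box a (Form.updF U g (Form.cbox B φ))) := by
    intro f a haB g hrel
    have s2 : Deriv (Form.updF U f (Form.cbox B φ) ⟶
        Form.updF U f (Form.box a (Form.cbox B φ))) := dUpdMono hU (hmix2 a haB)
    set lfa : List U.E := listP hU.2.1 (U.rel a f) with hlfadef
    have hlfa : ∀ g, g ∈ lfa ↔ U.rel a f g := fun g => listP_iff _ _ g
    have s3 := Deriv.updBox U f hU a (Form.cbox B φ) hcbwf lfa hlfa
    have hwfand : ∀ χ ∈ lfa.map (fun g => Form.box a (Form.updF U g (Form.cbox B φ))),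
        χ.WF := by
      intro χ hχ
      obtain ⟨g', -, rfl⟩ := List.mem_map.1 hχ
      exact wf_box.2 (wf_updF' hU g' hcbwf)
    have s4 : Deriv (bigAnd (lfa.map fun g => Form.box a
        (Form.updF U g (Form.cbox B φ))) ⟶ Form.box a (Form.updF U g (Form.cbox B φ))) :=
      dBigAndElim hwfand (List.mem_map.2 ⟨g, (hlfa g).2 hrel, rfl⟩)
    have t1 : Deriv (Form.updF U f (Form.cbox B φ) ⟶ (U.pre f ⟶ bigAnd
        (lfa.map fun g => Form.box a (Form.updF U g (Form.cbox B φ))))) :=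
      dImpTrans s2 (dBiImpL s3)
    exact dImpTrans (dUncurry t1) s4
  intro x
  constructor
  · -- truth implies membership : via the updCK rule
    intro hsat
    set GS : U.E → (Fin L.length → Bool) → Prop := fun f v =>
      ∃ hcon : Con (desc L v),
        sat (Form.updF U f (Form.cbox B φ)) (CanM L) ⟨v, hcon⟩ with hGSdef
    set χf : U.E → Form A P := fun f =>
      bigOr ((listP (by infer_instance) (GS f)).map (desc L)) with hχfdef
    have hwfgood : ∀ f, ∀ χ ∈ (listP (by infer_instance) (GS f)).map (desc L), χ.WF := by
      intro f χ hχ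
      obtain ⟨v, -, rfl⟩ := List.mem_map.1 hχ
      exact wf_desc hwf v
    have hχwf : ∀ f, (χf f).WF := fun f => wf_bigOr.2 (hwfgood f)
    -- premise 1
    have h1 : ∀ f, Deriv (χf f ⟶ Form.updF U f φ) := by
      intro f
      refine dBigOrElim ?_ (wf_updF' hU f hφwf) (hwfgood f)
      intro ψ hψ
      obtain ⟨v, hv, rfl⟩ := List.mem_map.1 hψ
      obtain ⟨hcon, hsatv⟩ := (listP_iff _ _ v).1 hv
      have hsatf : sat (Form.updF U f φ) (CanM L) ⟨v, hcon⟩ := by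
        erw [sat_updF]
        intro hpre
        exact (hsatv hpre) _ Relation.ReflTransGen.refl
      exact dDescOfMem hwf ((IH _ (hm_uf f) (hUFφL f) ⟨v, hcon⟩).1 hsatf)
    -- premise 2
    have h2 : ∀ (f : U.E) (a : A), a ∈ B → ∀ g, U.rel a f g →
        Deriv ((χf f ⋏ U.pre f) ⟶ Form.box a (χf g)) := by
      intro f a haB g hrel
      refine dUncurry (dBigOrElim ?_ (wf_imp.2 ⟨wf_pre hU f, wf_box.2 (hχwf g)⟩)
        (hwfgood f))
      intro ψ hψ
      obtain ⟨v, hv, rfl⟩ := List.mem_map.1 hψ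
      obtain ⟨hcon, hsatv⟩ := (listP_iff _ _ v).1 hv
      by_cases hprev : memv L v (U.pre f)
      · have hsatpre : sat (U.pre f) (CanM L) ⟨v, hcon⟩ :=
          (IH _ (hm_pre f) (hpreL f) ⟨v, hcon⟩).2 hprev
        have hbox : Deriv (desc L v ⟶ Form.box a (χf g)) := by
          refine canonicalBox hwf (closed_box hwf hcl) ⟨v, hcon⟩ a (hχwf g) ?_
          intro y hRy
          have hGSy : GS g y.1 := by
            refine ⟨y.2, ?_⟩
            erw [sat_updF]
            intro hpreg
            erw [sat_cbox]
            intro z hz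
            have hedge : ∃ b ∈ B,
                ((CanM L).prodUpd U).R b ⟨(⟨v, hcon⟩, f), hsatpre⟩ ⟨(y, g), hpreg⟩ :=
              ⟨a, haB, hRy, hrel⟩
            exact (hsatv hsatpre) z (Relation.ReflTransGen.head hedge hz)
          have : (⟨y.1, y.2⟩ : CanS L) = y := rfl
          exact dBigOrIntro (hwfgood g)
            (List.mem_map.2 ⟨y.1, (listP_iff _ _ y.1).2 hGSy, rfl⟩)
        exact dImpTrans hbox (dTaut2 (imp X0 (imp X1 X0)) (by decide)
          (wf_box.2 (hχwf g)) (wf_pre hU f))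
      · have hneg : Deriv (desc L v ⟶ ∼(U.pre f)) := dDescOfNotMem hwf (hpreL f) hprev
        exact dImpTrans hneg (dTaut2 (imp (.neg X0) (imp X0 X1)) (by decide)
          (wf_pre hU f) (wf_box.2 (hχwf g)))
    have hCK := Deriv.updCK U e hU B φ hφwf χf hχwf
      (fun f _ => h1 f) (fun f _ a ha g hg => h2 f a ha g hg)
    have hGSx : GS e x.1 := ⟨x.2, by
      have : (⟨x.1, x.2⟩ : CanS L) = x := rfl
      rw [this]; exact hsat⟩
    have hxχ : Deriv (desc L x.1 ⟶ χf e) :=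
      dBigOrIntro (hwfgood e) (List.mem_map.2 ⟨x.1, (listP_iff _ _ x.1).2 hGSx, rfl⟩)
    exact memv_of_deriv hwf x.2 hL (dImpTrans hxχ hCK)
  · -- membership implies truth
    intro hmem
    erw [sat_updF]
    intro hpre
    erw [sat_cbox]
    intro z hz
    -- invariant along the path
    have hinv : ∀ z : ((CanM L).prodUpd U).S, Relation.ReflTransGen
        (fun x y => ∃ b ∈ B, ((CanM L).prodUpd U).R b x y) ⟨(x, e), hpre⟩ z →
        memv L z.1.1.1 (Form.updF U z.1.2 (Form.cbox B φ)) := by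
      intro z hz
      induction hz with
      | refl => exact hmem
      | @tail b c hab hbc ih =>
          obtain ⟨a, haB, hRa, hrel⟩ := hbc
          have hbpre : memv L b.1.1.1 (U.pre b.1.2) :=
            (IH _ (hm_pre b.1.2) (hpreL b.1.2) b.1.1).1 b.2
          have hd : Deriv (desc L b.1.1.1 ⟶
              (Form.updF U b.1.2 (Form.cbox B φ) ⋏ U.pre b.1.2)) :=
            dImpAnd (dDescOfMem hwf ih) (dDescOfMem hwf hbpre)
          have hd2 : Deriv (desc L b.1.1.1 ⟶
              Form.box a (Form.updF U c.1.2 (Form.cbox B φ))) :=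
            dImpTrans hd (F2 b.1.2 a haB c.1.2 hrel)
          have hd3 : memv L b.1.1.1 (Form.box a (Form.updF U c.1.2 (Form.cbox B φ))) :=
            memv_of_deriv hwf b.1.1.2 (hboxUFcb a c.1.2) hd2
          exact hRa _ hd3
    obtain ⟨⟨t, f⟩, hpf⟩ := z
    have hmemf : memv L t.1 (Form.updF U f (Form.cbox B φ)) := hinv _ hz
    have hmemUFφ : memv L t.1 (Form.updF U f φ) :=
      memv_of_deriv hwf t.2 (hUFφL f) (dImpTrans (dDescOfMem hwf hmemf) (F1 f))
    have hsatUFφ : sat (Form.updF U f φ) (CanM L) t :=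
      (IH _ (hm_uf f) (hUFφL f) t).2 hmemUFφ
    exact hsatUFφ hpf

end UM

namespace UM

variable {A P : Type}

open PF

lemma truthLemma [hA : Finite A] {L : List (Form A P)} (hwf : ∀ ψ ∈ L, ψ.WF)
    (hcl : ∀ ψ ∈ L, ∀ (hψ : ψ.WF), ∀ χ ∈ clo ψ hψ, χ ∈ L) :
    ∀ (n : ℕ) (ψ : Form A P), meas ψ ≤ n → ψ ∈ L → ∀ x : CanS L,
      (sat ψ (CanM L) x ↔ memv L x.1 ψ) := by
  classical
  intro n
  induction n using Nat.strong_induction_on with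
  | _ n IHn =>
  intro ψ hm hL x
  have IH : ∀ χ, meas χ < meas ψ → χ ∈ L → ∀ y : CanS L,
      (sat χ (CanM L) y ↔ memv L y.1 χ) :=
    fun χ hlt hχL y => IHn (meas χ) (lt_of_lt_of_le hlt hm) χ (le_refl _) hχL y
  have hψwf := hwf ψ hL
  have hdx : (desc L x.1).WF := wf_desc hwf x.1
  cases ψ with
  | atom p => exact Iff.rfl
  | top =>
      erw [sat_top]
      exact ⟨fun _ => memv_of_deriv hwf x.2 hL (dWeaken hdx dTop), fun _ => trivial⟩
  | bot =>
      erw [sat_bot]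
      exact ⟨False.elim, fun hmem => x.2 (dDescOfMem hwf hmem)⟩
  | neg φ =>
      have hφL : φ ∈ L := hcl _ hL hψwf φ (by rw [clo]; simp [clo_self]; exact Or.inr (clo_self φ hψwf))
      have hmφ : meas φ < meas (∼φ) := by rw [meas_neg]; omega
      erw [sat_neg, IH φ hmφ hφL x, ← memv_not_iff hwf hφL hL]
  | and φ1 φ2 =>
      have h1L : φ1 ∈ L := hcl _ hL hψwf φ1
        (by rw [clo]; exact List.mem_cons_of_mem _ (List.mem_append_left _ (clo_self _ hψwf.1)))
      have h2L : φ2 ∈ L := hcl _ hL hψwf φ2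
        (by rw [clo]; exact List.mem_cons_of_mem _ (List.mem_append_right _ (clo_self _ hψwf.2)))
      have hm1 : meas φ1 < meas (φ1 ⋏ φ2) := by rw [meas_and]; omega
      have hm2 : meas φ2 < meas (φ1 ⋏ φ2) := by rw [meas_and]; omega
      erw [sat_and, IH φ1 hm1 h1L x, IH φ2 hm2 h2L x]
      constructor
      · rintro ⟨ha, hb⟩
        exact memv_of_deriv hwf x.2 hL (dImpAnd (dDescOfMem hwf ha) (dDescOfMem hwf hb))
      · intro hmem
        have hd := dDescOfMem hwf hmem
        exact ⟨memv_of_deriv hwf x.2 h1L (dImpTrans hd (dAndElimL hψwf.1 hψwf.2)),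
          memv_of_deriv hwf x.2 h2L (dImpTrans hd (dAndElimR hψwf.1 hψwf.2))⟩
  | box a φ =>
      have hφL : φ ∈ L := hcl _ hL hψwf φ
        (by rw [clo]; exact List.mem_cons_of_mem _ (clo_self φ hψwf))
      have hmφ : meas φ < meas (Form.box a φ) := by rw [meas_box]; omega
      erw [sat_box]
      constructor
      · intro hsat
        refine memv_of_deriv hwf x.2 hL
          (canonicalBox hwf (closed_box hwf hcl) x a hψwf ?_)
        intro y hRy
        exact dDescOfMem hwf ((IH φ hmφ hφL y).1 (hsat y hRy))
      · intro hmem y hRy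
        exact (IH φ hmφ hφL y).2 (hRy φ hmem)
  | cbox B φ => exact truth_cbox hwf hcl B φ hL IH x
  | upd E rel pre post e ψ0 =>
      have hU : (Upd.mk E rel pre post).WF :=
        ⟨hψwf.1, hψwf.2.1, hψwf.2.2.1, hψwf.2.2.2.1, hψwf.2.2.2.2.1⟩
      cases ψ0 with
      | atom p =>
          have hpreL : pre e ∈ L := hcl _ hL hψwf _
            (by rw [clo]; exact List.mem_cons_of_mem _ (List.mem_append_left _ (clo_self _ _)))
          have hpostL : post e p ∈ L := hcl _ hL hψwf _
            (by rw [clo]; exact List.mem_cons_of_mem _ (List.mem_append_right _ (clo_self _ _)))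
          have hmpre := meas_pre_lt (U := ⟨E,rel,pre,post⟩) hU e e (Form.atom p)
          have hmpost := meas_post_lt (U := ⟨E,rel,pre,post⟩) hU e e p (Form.atom p)
          have hax := Deriv.updAtom ⟨E,rel,pre,post⟩ e hU p
          rw [show sat (Form.upd E rel pre post e (Form.atom p)) (CanM L) x ↔
            (sat (pre e) (CanM L) x → sat (post e p) (CanM L) x) from
              semUpdAtom (U := ⟨E,rel,pre,post⟩),
            IH _ hmpre hpreL x, IH _ hmpost hpostL x]
          constructor
          · intro h
            by_cases hpre : memv L x.1 (pre e)
            · have hpost := h hpre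
              have hd : Deriv (desc L x.1 ⟶ (pre e ⟶ post e p)) :=
                dImpTrans (dDescOfMem hwf hpost)
                  (dTaut2 (imp X0 (imp X1 X0)) (by decide) (hwf _ hpostL) (hwf _ hpreL))
              exact memv_of_deriv hwf x.2 hL (dImpTrans hd (dBiImpR hax))
            · have hd : Deriv (desc L x.1 ⟶ (pre e ⟶ post e p)) :=
                dImpTrans (dDescOfNotMem hwf hpreL hpre)
                  (dTaut2 (imp (.neg X0) (imp X0 X1)) (by decide) (hwf _ hpreL) (hwf _ hpostL))
              exact memv_of_deriv hwf x.2 hL (dImpTrans hd (dBiImpR hax))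
          · intro hmem hpre
            have hd : Deriv (desc L x.1 ⟶ post e p) :=
              dMPU (dImpTrans (dDescOfMem hwf hmem) (dBiImpL hax)) (dDescOfMem hwf hpre)
            exact memv_of_deriv hwf x.2 hpostL hd
      | top =>
          constructor
          · intro _
            exact memv_of_deriv hwf x.2 hL (dWeaken hdx (dUpdTop hU e))
          · intro _
            exact semUpdTop (U := ⟨E,rel,pre,post⟩)
      | bot =>
          have hpreL : pre e ∈ L := hcl _ hL hψwf _
            (by rw [clo]; exact List.mem_cons_of_mem _ (clo_self _ _))
          have hmpre := meas_pre_lt (U := ⟨E,rel,pre,post⟩) hU e e Form.bot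
          have hax := dUpdBot hU e
          rw [show sat (Form.upd E rel pre post e Form.bot) (CanM L) x ↔
            ¬ sat (pre e) (CanM L) x from semUpdBot (U := ⟨E,rel,pre,post⟩),
            IH _ hmpre hpreL x]
          constructor
          · intro h
            exact memv_of_deriv hwf x.2 hL
              (dImpTrans (dDescOfNotMem hwf hpreL h) (dBiImpR hax))
          · intro hmem hpre
            exact x.2 (dImpTrans (dImpAnd (dImpTrans (dDescOfMem hwf hmem) (dBiImpL hax))
              (dDescOfMem hwf hpre))
              (dUncurry (dTaut1 (imp (.neg X0) (imp X0 .bot)) (by decide) (hwf _ hpreL))))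
      | neg φ0 =>
          have hpreL : pre e ∈ L := hcl _ hL hψwf _
            (by rw [clo]; exact List.mem_cons_of_mem _ (List.mem_append_left _ (clo_self _ _)))
          have hufL : Form.updF ⟨E,rel,pre,post⟩ e φ0 ∈ L := hcl _ hL hψwf _
            (by rw [clo]; exact List.mem_cons_of_mem _ (List.mem_append_right _ (clo_self _ _)))
          have hmpre := meas_pre_lt (U := ⟨E,rel,pre,post⟩) hU e e (∼φ0)
          have hmuf : meas (Form.updF ⟨E,rel,pre,post⟩ e φ0) <
              meas (Form.updF ⟨E,rel,pre,post⟩ e (∼φ0)) :=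
            meas_updF_lt_updF e e (by rw [meas_neg]; omega)
          have hφ0wf : φ0.WF := hψwf.2.2.2.2.2
          have hax := Deriv.updNeg ⟨E,rel,pre,post⟩ e hU φ0 hφ0wf
          rw [show sat (Form.upd E rel pre post e (∼φ0)) (CanM L) x ↔
            (sat (pre e) (CanM L) x → ¬ sat (Form.updF ⟨E,rel,pre,post⟩ e φ0) (CanM L) x)
            from semUpdNeg (U := ⟨E,rel,pre,post⟩), IH _ hmpre hpreL x, IH _ hmuf hufL x]
          constructor
          · intro h
            by_cases hpre : memv L x.1 (pre e)
            · have hn := h hpre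
              have hd : Deriv (desc L x.1 ⟶ (pre e ⟶ ∼(Form.updF ⟨E,rel,pre,post⟩ e φ0))) :=
                dImpTrans (dDescOfNotMem hwf hufL hn)
                  (dTaut2 (imp X0 (imp X1 X0)) (by decide)
                    (wf_neg.2 (hwf _ hufL)) (hwf _ hpreL))
              exact memv_of_deriv hwf x.2 hL (dImpTrans hd (dBiImpR hax))
            · have hd : Deriv (desc L x.1 ⟶ (pre e ⟶ ∼(Form.updF ⟨E,rel,pre,post⟩ e φ0))) :=
                dImpTrans (dDescOfNotMem hwf hpreL hpre)
                  (dTaut2 (imp (.neg X0) (imp X0 X1)) (by decide)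
                    (hwf _ hpreL) (wf_neg.2 (hwf _ hufL)))
              exact memv_of_deriv hwf x.2 hL (dImpTrans hd (dBiImpR hax))
          · intro hmem hpre hc
            have hd1 : Deriv (desc L x.1 ⟶ ∼(Form.updF ⟨E,rel,pre,post⟩ e φ0)) :=
              dMPU (dImpTrans (dDescOfMem hwf hmem) (dBiImpL hax)) (dDescOfMem hwf hpre)
            exact x.2 (dImpTrans (dImpAnd (dDescOfMem hwf hc) hd1)
              (dUncurry (dTaut1 (imp X0 (imp (.neg X0) .bot)) (by decide) (hwf _ hufL))))
      | and φ1 φ2 =>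
          have h1L : Form.updF ⟨E,rel,pre,post⟩ e φ1 ∈ L := hcl _ hL hψwf _
            (by rw [clo]; exact List.mem_cons_of_mem _ (List.mem_append_left _ (clo_self _ _)))
          have h2L : Form.updF ⟨E,rel,pre,post⟩ e φ2 ∈ L := hcl _ hL hψwf _
            (by rw [clo]; exact List.mem_cons_of_mem _ (List.mem_append_right _ (clo_self _ _)))
          have hm1 : meas (Form.updF ⟨E,rel,pre,post⟩ e φ1) <
              meas (Form.updF ⟨E,rel,pre,post⟩ e (φ1 ⋏ φ2)) :=
            meas_updF_lt_updF e e (by rw [meas_and]; omega)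
          have hm2 : meas (Form.updF ⟨E,rel,pre,post⟩ e φ2) <
              meas (Form.updF ⟨E,rel,pre,post⟩ e (φ1 ⋏ φ2)) :=
            meas_updF_lt_updF e e (by rw [meas_and]; omega)
          have hax := Deriv.updAnd ⟨E,rel,pre,post⟩ e hU φ1 φ2 hψwf.2.2.2.2.2.1
            hψwf.2.2.2.2.2.2
          rw [show sat (Form.upd E rel pre post e (φ1 ⋏ φ2)) (CanM L) x ↔
            (sat (Form.updF ⟨E,rel,pre,post⟩ e φ1) (CanM L) x ∧
              sat (Form.updF ⟨E,rel,pre,post⟩ e φ2) (CanM L) x) from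
            semUpdAnd (U := ⟨E,rel,pre,post⟩), IH _ hm1 h1L x, IH _ hm2 h2L x]
          constructor
          · rintro ⟨ha, hb⟩
            exact memv_of_deriv hwf x.2 hL (dImpTrans
              (dImpAnd (dDescOfMem hwf ha) (dDescOfMem hwf hb)) (dBiImpR hax))
          · intro hmem
            have hd := dImpTrans (dDescOfMem hwf hmem) (dBiImpL hax)
            have hw1 := wf_updF' (U := ⟨E,rel,pre,post⟩) hU e hψwf.2.2.2.2.2.1
            have hw2 := wf_updF' (U := ⟨E,rel,pre,post⟩) hU e hψwf.2.2.2.2.2.2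
            exact ⟨memv_of_deriv hwf x.2 h1L (dImpTrans hd (dAndElimL hw1 hw2)),
              memv_of_deriv hwf x.2 h2L (dImpTrans hd (dAndElimR hw1 hw2))⟩
      | box a φ0 => exact truth_updbox hwf hcl ⟨E,rel,pre,post⟩ hU e a φ0 hL IH x
      | cbox B φ0 => exact truth_updcbox hwf hcl ⟨E,rel,pre,post⟩ hU e B φ0 hL IH x
      | upd E' rel' pre' post' e' φ0 =>
          have hU' : (Upd.mk E' rel' pre' post').WF :=
            ⟨hψwf.2.2.2.2.2.1, hψwf.2.2.2.2.2.2.1, hψwf.2.2.2.2.2.2.2.1,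
              hψwf.2.2.2.2.2.2.2.2.1, hψwf.2.2.2.2.2.2.2.2.2.1⟩
          have hφ0wf : φ0.WF := hψwf.2.2.2.2.2.2.2.2.2.2
          have hcL : Form.updF (Upd.comp ⟨E,rel,pre,post⟩ ⟨E',rel',pre',post'⟩) (e, e') φ0
              ∈ L := hcl _ hL hψwf _
            (by rw [clo]; exact List.mem_cons_of_mem _ (clo_self _ _))
          have hmc := meas_comp_lt (U := ⟨E,rel,pre,post⟩) (U' := ⟨E',rel',pre',post'⟩)
            hU hU' e e' φ0
          have hax := Deriv.updComp ⟨E,rel,pre,post⟩ e ⟨E',rel',pre',post'⟩ e' hU hU'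
            φ0 hφ0wf
          rw [show sat (Form.upd E rel pre post e (Form.upd E' rel' pre' post' e' φ0))
            (CanM L) x ↔ sat (Form.updF (Upd.comp ⟨E,rel,pre,post⟩
              ⟨E',rel',pre',post'⟩) (e, e') φ0) (CanM L) x from
            semUpdComp (U := ⟨E,rel,pre,post⟩) (U' := ⟨E',rel',pre',post'⟩),
            IH _ hmc hcL x]
          constructor
          · intro hmem
            exact memv_of_deriv hwf x.2 hL
              (dImpTrans (dDescOfMem hwf hmem) (dBiImpR hax))
          · intro hmem
            exact memv_of_deriv hwf x.2 hcL
              (dImpTrans (dDescOfMem hwf hmem) (dBiImpL hax))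

end UM

open UM UM.PF in
/-- the proof system UM is complete: every formula `φ ∈ L` that is
valid (true in every epistemic state) is derivable in UM. -/
theorem um_completeness {A P : Type} [Finite A] [Countable P]
    (φ : Form A P) (hφ : φ.WF)
    (hvalid : ∀ M : Model A P, Nonempty M.S → ∀ s : M.S, sat φ M s) :
    Deriv φ := by
  classical
  by_contra hnd
  -- the closure of φ
  set L : List (Form A P) := clo φ hφ with hLdef
  have hwfL : ∀ ψ ∈ L, ψ.WF := clo_wf (meas φ) φ hφ (le_refl _)
  have hclL : ∀ ψ ∈ L, ∀ (hψ : ψ.WF), ∀ χ ∈ clo ψ hψ, χ ∈ L :=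
    clo_closed (meas φ) φ hφ (le_refl _)
  have hφL : φ ∈ L := clo_self φ hφ
  -- Lindenbaum : find a consistent description not containing φ
  have hex : ∃ v ∈ allVecs L.length, ¬ Deriv ((∼φ ⋏ desc L v) ⟶ ⊥') := by
    by_contra hc
    push_neg at hc
    have hEM := dEM L hwfL
    have helim : Deriv (bigOr ((allVecs L.length).map (desc L)) ⟶ (∼φ ⟶ ⊥')) := by
      refine dBigOrElim ?_ (wf_imp.2 ⟨wf_neg.2 hφ, trivial⟩) ?_
      · intro ψ hψ
        obtain ⟨v, hv, rfl⟩ := List.mem_map.1 hψ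
        exact dSwap (dCurry (hc v hv))
      · intro ψ hψ
        obtain ⟨v, -, rfl⟩ := List.mem_map.1 hψ
        exact wf_desc hwfL v
    have : Deriv (∼φ ⟶ ⊥') := Deriv.mp helim hEM
    exact hnd (dDNE (dNotOfImpBot this))
  obtain ⟨v, -, hvcon⟩ := hex
  have hcon : Con (desc L v) := by
    intro hc
    exact hvcon (dImpTrans (dAndElimR (wf_neg.2 hφ) (wf_desc hwfL v)) hc)
  have hnmem : ¬ memv L v φ := by
    intro hmem
    have hd : Deriv (desc L v ⟶ φ) := dDescOfMem hwfL hmem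
    have ht : Deriv ((desc L v ⟶ φ) ⟶ ((∼φ ⋏ desc L v) ⟶ ⊥')) :=
      dTaut2 (UM.PF.imp (UM.PF.imp X1 X0) (UM.PF.imp (.and (.neg X0) X1) .bot))
        (by decide) hφ (wf_desc hwfL v)
    exact hvcon (Deriv.mp ht hd)
  set x : CanS L := ⟨v, hcon⟩ with hxdef
  have hsat : sat φ (CanM L) x := hvalid (CanM L) ⟨x⟩ x
  have := (truthLemma hwfL hclL (meas φ) φ (le_refl _) hφL x).1 hsat
  exact hnmem this
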